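/- arXiv:1209.3980 — 3 statements merged into one kernel-verified Lean document; each statement's English description precedes it below -/
import Mathlib

section
/- Let p > 1. If c₁, c₂, c₃, c₄ ∈ R are such that the map from P² to C_p(R²) given by P ↦ c₁·(h(I_p⁺P,·)^p − h(E_p⁺P,·)^p) + c₂·(h(I_p⁻P,·)^p − h(E_p⁻P,·)^p) + c₃·(h(I_p⁺P,·)^p − h(E_p⁺P,·)^p + J_p⁺P − F_p⁺P) + c₄·(h(I_p⁻P,·)^p − h(E_p⁻P,·)^p + J_p⁻P − F_p⁻P) is continuous at the line segment [o, e₁], then c₁ = c₂ = c₃ = c₄ = 0. -/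
open MeasureTheory Metric
open scoped RealInnerProductSpace Pointwise

noncomputable section

/-- Euclidean `n`-space. -/
abbrev Eucl (n : ℕ) : Type := EuclideanSpace ℝ (Fin n)

/-- A convex body: a nonempty compact convex subset of `ℝⁿ`. -/
def IsConvexBody {n : ℕ} (K : Set (Eucl n)) : Prop :=
  K.Nonempty ∧ IsCompact K ∧ Convex ℝ K

/-- A convex body containing the origin. -/
def IsConvexBodyO {n : ℕ} (K : Set (Eucl n)) : Prop :=
  IsConvexBody K ∧ (0 : Eucl n) ∈ K

/-- A convex polytope: the convex hull of a finite nonempty set of points. -/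
def IsPolytope {n : ℕ} (P : Set (Eucl n)) : Prop :=
  ∃ S : Finset (Eucl n), S.Nonempty ∧ P = convexHull ℝ (S : Set (Eucl n))

/-- A convex polytope containing the origin. -/
def IsPolytopeO {n : ℕ} (P : Set (Eucl n)) : Prop :=
  IsPolytope P ∧ (0 : Eucl n) ∈ P

/-- The support function `h(K, u) = sup_{x ∈ K} ⟨x, u⟩`. -/
def suppFn {n : ℕ} (K : Set (Eucl n)) (u : Eucl n) : ℝ :=
  sSup ((fun x => ⟪x, u⟫) '' K)

/-- The dimension of a convex set: the dimension of its affine hull. -/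
def setDim {n : ℕ} (P : Set (Eucl n)) : ℕ :=
  Module.finrank ℝ (affineSpan ℝ P).direction

/-- `h(I_p⁺ K, u)^p = max_{x ∈ K} ⟨x, u⟩₊^p`. -/
def IppF {n : ℕ} (p : ℝ) (K : Set (Eucl n)) (u : Eucl n) : ℝ :=
  sSup ((fun x => (max ⟪x, u⟫ 0) ^ p) '' K)

/-- `h(I_p⁻ K, u)^p = max_{x ∈ K} ⟨x, u⟩₋^p`. -/
def ImpF {n : ℕ} (p : ℝ) (K : Set (Eucl n)) (u : Eucl n) : ℝ :=
  sSup ((fun x => (max (-⟪x, u⟫) 0) ^ p) '' K)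

/-- `(J_p⁺ K)(u) = min_{x ∈ K} ⟨x, u⟩₊^p`. -/
def JppF {n : ℕ} (p : ℝ) (K : Set (Eucl n)) (u : Eucl n) : ℝ :=
  sInf ((fun x => (max ⟪x, u⟫ 0) ^ p) '' K)

/-- `(J_p⁻ K)(u) = min_{x ∈ K} ⟨x, u⟩₋^p`. -/
def JmpF {n : ℕ} (p : ℝ) (K : Set (Eucl n)) (u : Eucl n) : ℝ :=
  sInf ((fun x => (max (-⟪x, u⟫) 0) ^ p) '' K)

/-- The face `F(K, v) = {x ∈ K : ⟨x, v⟩ = h(K, v)}`. -/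
def face {n : ℕ} (K : Set (Eucl n)) (v : Eucl n) : Set (Eucl n) :=
  {x ∈ K | ⟪x, v⟫ = suppFn K v}

/-- `h(E_p⁺ K, u)^p = (1/2) Σ_{v ∈ S¹, h(K,v) = 0} max_{x ∈ F(K,v)} ⟨x, u⟩₊^p`. -/
def EppF {n : ℕ} (p : ℝ) (K : Set (Eucl n)) (u : Eucl n) : ℝ :=
  (1 / 2) * ∑' v : {v : Eucl n // ‖v‖ = 1 ∧ suppFn K v = 0},
    sSup ((fun x => (max ⟪x, u⟫ 0) ^ p) '' face K v.1)

/-- `h(E_p⁻ K, u)^p = (1/2) Σ_{v ∈ S¹, h(K,v) = 0} max_{x ∈ F(K,v)} ⟨x, u⟩₋^p`. -/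
def EmpF {n : ℕ} (p : ℝ) (K : Set (Eucl n)) (u : Eucl n) : ℝ :=
  (1 / 2) * ∑' v : {v : Eucl n // ‖v‖ = 1 ∧ suppFn K v = 0},
    sSup ((fun x => (max (-⟪x, u⟫) 0) ^ p) '' face K v.1)

/-- `(F_p⁺ K)(u) = (1/2) Σ_{v ∈ S¹, h(K,v) = 0} min_{x ∈ F(K,v)} ⟨x, u⟩₊^p`. -/
def FppF {n : ℕ} (p : ℝ) (K : Set (Eucl n)) (u : Eucl n) : ℝ :=
  (1 / 2) * ∑' v : {v : Eucl n // ‖v‖ = 1 ∧ suppFn K v = 0},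
    sInf ((fun x => (max ⟪x, u⟫ 0) ^ p) '' face K v.1)

/-- `(F_p⁻ K)(u) = (1/2) Σ_{v ∈ S¹, h(K,v) = 0} min_{x ∈ F(K,v)} ⟨x, u⟩₋^p`. -/
def FmpF {n : ℕ} (p : ℝ) (K : Set (Eucl n)) (u : Eucl n) : ℝ :=
  (1 / 2) * ∑' v : {v : Eucl n // ‖v‖ = 1 ∧ suppFn K v = 0},
    sInf ((fun x => (max (-⟪x, u⟫) 0) ^ p) '' face K v.1)

/-- The maximum norm over the unit sphere. -/
def sphSup {n : ℕ} (f : Eucl n → ℝ) : ℝ :=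
  ⨆ u : Metric.sphere (0 : Eucl n) 1, |f u.1|

/-- The standard simplex `Tⁿ = conv{o, e₁, …, e_n}`. -/
def stdT (n : ℕ) : Set (Eucl n) :=
  convexHull ℝ (insert (0 : Eucl n) (Set.range fun i : Fin n => EuclideanSpace.single i (1 : ℝ)))

/-- The simplex `T̃ⁿ⁻¹ = conv{e₁, …, e_n}`. -/
def tilT (n : ℕ) : Set (Eucl n) :=
  convexHull ℝ (Set.range fun i : Fin n => EuclideanSpace.single i (1 : ℝ))

namespace St8

def ev1 : Eucl 2 := EuclideanSpace.single (0 : Fin 2) (1:ℝ)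
def ev2 : Eucl 2 := EuclideanSpace.single (1 : Fin 2) (1:ℝ)

lemma inner2 (x u : Eucl 2) : ⟪x, u⟫ = x 0 * u 0 + x 1 * u 1 := by
  simp [PiLp.inner_apply, Fin.sum_univ_two]; ring

@[simp] lemma ev1_0 : ev1 0 = 1 := by simp [ev1, EuclideanSpace.single_apply]
@[simp] lemma ev1_1 : ev1 1 = 0 := by simp [ev1, EuclideanSpace.single_apply]
@[simp] lemma ev2_0 : ev2 0 = 0 := by simp [ev2, EuclideanSpace.single_apply]
@[simp] lemma ev2_1 : ev2 1 = 1 := by simp [ev2, EuclideanSpace.single_apply]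

@[simp] lemma norm_ev1 : ‖ev1‖ = 1 := by simp [ev1, EuclideanSpace.norm_single]
@[simp] lemma norm_ev2 : ‖ev2‖ = 1 := by simp [ev2, EuclideanSpace.norm_single]

lemma ext2 {x y : Eucl 2} (h0 : x 0 = y 0) (h1 : x 1 = y 1) : x = y := by
  ext i; fin_cases i <;> assumption

lemma norm2 (w : Eucl 2) : ‖w‖ = Real.sqrt (w 0 ^ 2 + w 1 ^ 2) := by
  rw [EuclideanSpace.norm_eq]
  simp [Fin.sum_univ_two, sq_abs]

lemma sq_sum_of_norm_one {v : Eucl 2} (hv : ‖v‖ = 1) : v 0 ^ 2 + v 1 ^ 2 = 1 := by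
  have h := real_inner_self_eq_norm_sq v
  rw [hv, inner2] at h
  nlinarith [h]

lemma abs_coord_le {u : Eucl 2} (hu : ‖u‖ = 1) (i : Fin 2) : |u i| ≤ 1 := by
  have h := sq_sum_of_norm_one hu
  have h0 : |u 0| ≤ 1 := by nlinarith [sq_abs (u 0), abs_nonneg (u 0), sq_nonneg (u 1)]
  have h1 : |u 1| ≤ 1 := by nlinarith [sq_abs (u 1), abs_nonneg (u 1), sq_nonneg (u 0)]
  fin_cases i
  · exact h0
  · exact h1

end St8

namespace St8
open Set

lemma isGreatest_hull (s : Set (Eucl 2)) (v : Eucl 2) (M : ℝ)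
    (hmem : ∃ x ∈ s, ⟪x, v⟫ = M) (hub : ∀ x ∈ s, ⟪x, v⟫ ≤ M) :
    IsGreatest ((fun x => ⟪x, v⟫) '' convexHull ℝ s) M := by
  constructor
  · obtain ⟨x, hx, hxv⟩ := hmem
    exact ⟨x, subset_convexHull ℝ s hx, hxv⟩
  · rintro y ⟨x, hx, rfl⟩
    exact convexHull_min hub
      (convex_halfSpace_le ⟨fun a b => inner_add_left a b v,
        fun c x => real_inner_smul_left x v c⟩ M) hx

lemma isLeast_hull (s : Set (Eucl 2)) (v : Eucl 2) (m : ℝ)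
    (hmem : ∃ x ∈ s, ⟪x, v⟫ = m) (hlb : ∀ x ∈ s, m ≤ ⟪x, v⟫) :
    IsLeast ((fun x => ⟪x, v⟫) '' convexHull ℝ s) m := by
  constructor
  · obtain ⟨x, hx, hxv⟩ := hmem
    exact ⟨x, subset_convexHull ℝ s hx, hxv⟩
  · rintro y ⟨x, hx, rfl⟩
    exact convexHull_min hlb
      (convex_halfSpace_ge ⟨fun a b => inner_add_left a b v,
        fun c x => real_inner_smul_left x v c⟩ m) hx

lemma sSup_image_hull (f : ℝ → ℝ) (hf : Monotone f) (s : Set (Eucl 2)) (v : Eucl 2) (M : ℝ)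
    (hmem : ∃ x ∈ s, ⟪x, v⟫ = M) (hub : ∀ x ∈ s, ⟪x, v⟫ ≤ M) :
    sSup ((fun x => f ⟪x, v⟫) '' convexHull ℝ s) = f M := by
  have h := isGreatest_hull s v M hmem hub
  have h2 : IsGreatest ((fun x => f ⟪x, v⟫) '' convexHull ℝ s) (f M) := by
    constructor
    · obtain ⟨x, hx, hxv⟩ := h.1
      exact ⟨x, hx, congrArg f hxv⟩
    · rintro y ⟨x, hx, rfl⟩
      exact hf (h.2 ⟨x, hx, rfl⟩)
  exact h2.csSup_eq

lemma sInf_image_hull (f : ℝ → ℝ) (hf : Monotone f) (s : Set (Eucl 2)) (v : Eucl 2) (m : ℝ)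
    (hmem : ∃ x ∈ s, ⟪x, v⟫ = m) (hlb : ∀ x ∈ s, m ≤ ⟪x, v⟫) :
    sInf ((fun x => f ⟪x, v⟫) '' convexHull ℝ s) = f m := by
  have h := isLeast_hull s v m hmem hlb
  have h2 : IsLeast ((fun x => f ⟪x, v⟫) '' convexHull ℝ s) (f m) := by
    constructor
    · obtain ⟨x, hx, hxv⟩ := h.1
      exact ⟨x, hx, congrArg f hxv⟩
    · rintro y ⟨x, hx, rfl⟩
      exact hf (h.2 ⟨x, hx, rfl⟩)
  exact h2.csInf_eq

lemma pair_hmem_max (a b v : Eucl 2) :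
    ∃ x ∈ ({a, b} : Set (Eucl 2)), ⟪x, v⟫ = max ⟪a, v⟫ ⟪b, v⟫ := by
  rcases max_cases ⟪a, v⟫ ⟪b, v⟫ with ⟨h, _⟩ | ⟨h, _⟩
  · exact ⟨a, by simp, h.symm⟩
  · exact ⟨b, by simp, h.symm⟩

lemma pair_hub_max (a b v : Eucl 2) :
    ∀ x ∈ ({a, b} : Set (Eucl 2)), ⟪x, v⟫ ≤ max ⟪a, v⟫ ⟪b, v⟫ := by
  rintro x (rfl | rfl)
  · exact le_max_left _ _
  · exact le_max_right _ _

lemma pair_hmem_min (a b v : Eucl 2) :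
    ∃ x ∈ ({a, b} : Set (Eucl 2)), ⟪x, v⟫ = min ⟪a, v⟫ ⟪b, v⟫ := by
  rcases min_cases ⟪a, v⟫ ⟪b, v⟫ with ⟨h, _⟩ | ⟨h, _⟩
  · exact ⟨a, by simp, h.symm⟩
  · exact ⟨b, by simp, h.symm⟩

lemma pair_hlb_min (a b v : Eucl 2) :
    ∀ x ∈ ({a, b} : Set (Eucl 2)), min ⟪a, v⟫ ⟪b, v⟫ ≤ ⟪x, v⟫ := by
  rintro x (rfl | rfl)
  · exact min_le_left _ _
  · exact min_le_right _ _

lemma triple_hmem_max (a b c v : Eucl 2) :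
    ∃ x ∈ ({a, b, c} : Set (Eucl 2)), ⟪x, v⟫ = max (max ⟪a, v⟫ ⟪b, v⟫) ⟪c, v⟫ := by
  rcases max_cases (max ⟪a, v⟫ ⟪b, v⟫) ⟪c, v⟫ with ⟨h, _⟩ | ⟨h, _⟩
  · rcases max_cases ⟪a, v⟫ ⟪b, v⟫ with ⟨h2, _⟩ | ⟨h2, _⟩
    · exact ⟨a, by simp, by rw [h, h2]⟩
    · exact ⟨b, by simp, by rw [h, h2]⟩
  · exact ⟨c, by simp, h.symm⟩

lemma triple_hub_max (a b c v : Eucl 2) :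
    ∀ x ∈ ({a, b, c} : Set (Eucl 2)), ⟪x, v⟫ ≤ max (max ⟪a, v⟫ ⟪b, v⟫) ⟪c, v⟫ := by
  rintro x (rfl | rfl | rfl)
  · exact le_trans (le_max_left _ _) (le_max_left _ _)
  · exact le_trans (le_max_right _ _) (le_max_left _ _)
  · exact le_max_right _ _

lemma triple_hmem_min (a b c v : Eucl 2) :
    ∃ x ∈ ({a, b, c} : Set (Eucl 2)), ⟪x, v⟫ = min (min ⟪a, v⟫ ⟪b, v⟫) ⟪c, v⟫ := by
  rcases min_cases (min ⟪a, v⟫ ⟪b, v⟫) ⟪c, v⟫ with ⟨h, _⟩ | ⟨h, _⟩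
  · rcases min_cases ⟪a, v⟫ ⟪b, v⟫ with ⟨h2, _⟩ | ⟨h2, _⟩
    · exact ⟨a, by simp, by rw [h, h2]⟩
    · exact ⟨b, by simp, by rw [h, h2]⟩
  · exact ⟨c, by simp, h.symm⟩

lemma triple_hlb_min (a b c v : Eucl 2) :
    ∀ x ∈ ({a, b, c} : Set (Eucl 2)), min (min ⟪a, v⟫ ⟪b, v⟫) ⟪c, v⟫ ≤ ⟪x, v⟫ := by
  rintro x (rfl | rfl | rfl)
  · exact le_trans (min_le_left _ _) (min_le_left _ _)
  · exact le_trans (min_le_left _ _) (min_le_right _ _)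
  · exact min_le_right _ _

/-- the function `s ↦ (s₊)^p` -/
def fP (p s : ℝ) : ℝ := (max s 0) ^ p

lemma fP_mono {p : ℝ} (hp : 0 ≤ p) : Monotone (fP p) := fun a b hab =>
  Real.rpow_le_rpow (le_max_right _ _) (max_le_max hab le_rfl) hp

lemma fP_nonneg (p s : ℝ) : 0 ≤ fP p s := Real.rpow_nonneg (le_max_right _ _) p

lemma fP_nonpos {p s : ℝ} (hp : p ≠ 0) (h : s ≤ 0) : fP p s = 0 := by
  rw [fP, max_eq_right h, Real.zero_rpow hp]

lemma fP_zero {p : ℝ} (hp : p ≠ 0) : fP p 0 = 0 := fP_nonpos hp le_rfl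

lemma fP_one (p : ℝ) : fP p 1 = 1 := by
  rw [fP, max_eq_left zero_le_one, Real.one_rpow]

lemma fP_le_one {p s : ℝ} (hp : 0 ≤ p) (h : s ≤ 1) : fP p s ≤ 1 :=
  Real.rpow_le_one (le_max_right _ _) (max_le h zero_le_one) hp

lemma mem_seg0 {b x : Eucl 2} :
    x ∈ segment ℝ (0 : Eucl 2) b ↔ ∃ θ : ℝ, 0 ≤ θ ∧ θ ≤ 1 ∧ x = θ • b := by
  rw [segment_eq_image]
  constructor
  · rintro ⟨θ, ⟨h0, h1⟩, rfl⟩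
    exact ⟨θ, h0, h1, by simp⟩
  · rintro ⟨θ, h0, h1, rfl⟩
    exact ⟨θ, ⟨h0, h1⟩, by simp⟩

end St8

namespace St8
open Set

@[simp] lemma negp_apply (x : Eucl 2) (i : Fin 2) : (-x) i = -(x i) := rfl
@[simp] lemma smulp_apply (c : ℝ) (x : Eucl 2) (i : Fin 2) : (c • x) i = c * x i := rfl
@[simp] lemma zerop_apply (i : Fin 2) : (0 : Eucl 2) i = 0 := rfl

@[simp] lemma inner_ev1_left (v : Eucl 2) : ⟪ev1, v⟫ = v 0 := by
  rw [inner2]; simp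

@[simp] lemma inner_ev2_left (v : Eucl 2) : ⟪ev2, v⟫ = v 1 := by
  rw [inner2]; simp

lemma tsum_eq_pair {ι : Type*} (f : ι → ℝ) (a b : ι) (hab : a ≠ b)
    (h : ∀ i, i ≠ a → i ≠ b → f i = 0) : ∑' i, f i = f a + f b := by
  classical
  rw [tsum_eq_sum (s := {a, b}) (by intro i hi; simp at hi; exact h i hi.1 hi.2)]
  rw [Finset.sum_pair hab]

lemma suppFn_seg (a b v : Eucl 2) :
    suppFn (segment ℝ a b) v = max ⟪a, v⟫ ⟪b, v⟫ := by
  rw [show segment ℝ a b = convexHull ℝ {a, b} from (convexHull_pair (𝕜 := ℝ) a b).symm]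
  exact (isGreatest_hull {a, b} v _ (pair_hmem_max a b v) (pair_hub_max a b v)).csSup_eq

lemma IppF_seg {p : ℝ} (hp : 0 ≤ p) (a b u : Eucl 2) :
    IppF p (segment ℝ a b) u = fP p (max ⟪a, u⟫ ⟪b, u⟫) := by
  rw [show segment ℝ a b = convexHull ℝ {a, b} from (convexHull_pair (𝕜 := ℝ) a b).symm]
  exact sSup_image_hull (fP p) (fP_mono hp) {a, b} u _ (pair_hmem_max a b u) (pair_hub_max a b u)

lemma JppF_seg {p : ℝ} (hp : 0 ≤ p) (a b u : Eucl 2) :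
    JppF p (segment ℝ a b) u = fP p (min ⟪a, u⟫ ⟪b, u⟫) := by
  rw [show segment ℝ a b = convexHull ℝ {a, b} from (convexHull_pair (𝕜 := ℝ) a b).symm]
  exact sInf_image_hull (fP p) (fP_mono hp) {a, b} u _ (pair_hmem_min a b u) (pair_hlb_min a b u)

lemma IppF_tri {p : ℝ} (hp : 0 ≤ p) (a b c u : Eucl 2) :
    IppF p (convexHull ℝ {a, b, c}) u = fP p (max (max ⟪a, u⟫ ⟪b, u⟫) ⟪c, u⟫) :=
  sSup_image_hull (fP p) (fP_mono hp) {a, b, c} u _ (triple_hmem_max a b c u) (triple_hub_max a b c u)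

lemma JppF_tri {p : ℝ} (hp : 0 ≤ p) (a b c u : Eucl 2) :
    JppF p (convexHull ℝ {a, b, c}) u = fP p (min (min ⟪a, u⟫ ⟪b, u⟫) ⟪c, u⟫) :=
  sInf_image_hull (fP p) (fP_mono hp) {a, b, c} u _ (triple_hmem_min a b c u) (triple_hlb_min a b c u)

lemma suppFn_tri (a b c v : Eucl 2) :
    suppFn (convexHull ℝ {a, b, c}) v = max (max ⟪a, v⟫ ⟪b, v⟫) ⟪c, v⟫ :=
  (isGreatest_hull {a, b, c} v _ (triple_hmem_max a b c v) (triple_hub_max a b c v)).csSup_eq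

/-! ### Faces of segments -/

lemma face_seg_both (a b v : Eucl 2) (ha : ⟪a, v⟫ = 0) (hb : ⟪b, v⟫ = 0) :
    face (segment ℝ a b) v = segment ℝ a b := by
  have hsupp : suppFn (segment ℝ a b) v = 0 := by rw [suppFn_seg, ha, hb, max_self]
  apply Set.eq_of_subset_of_subset
  · exact fun x hx => hx.1
  · intro x hx
    refine ⟨hx, ?_⟩
    rw [hsupp]
    obtain ⟨α, β, hα, hβ, hab, rfl⟩ := hx
    rw [inner_add_left, real_inner_smul_left, real_inner_smul_left, ha, hb]
    ring

lemma face_seg_left (a b v : Eucl 2) (ha : ⟪a, v⟫ = 0) (hb : ⟪b, v⟫ < 0) :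
    face (segment ℝ a b) v = {a} := by
  have hsupp : suppFn (segment ℝ a b) v = 0 := by rw [suppFn_seg, ha, max_eq_left hb.le]
  apply Set.eq_of_subset_of_subset
  · rintro x ⟨hx, hxv⟩
    rw [hsupp] at hxv
    obtain ⟨α, β, hα, hβ, hab, rfl⟩ := hx
    rw [inner_add_left, real_inner_smul_left, real_inner_smul_left, ha, mul_zero, zero_add] at hxv
    have hβ0 : β = 0 := by
      rcases eq_or_lt_of_le hβ with h | h
      · exact h.symm
      · nlinarith [mul_neg_of_pos_of_neg h hb]
    subst hβ0
    have hα1 : α = 1 := by linarith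
    subst hα1
    simp
  · rw [Set.singleton_subset_iff]
    exact ⟨left_mem_segment ℝ a b, by rw [ha, hsupp]⟩

lemma face_seg_right (a b v : Eucl 2) (ha : ⟪a, v⟫ < 0) (hb : ⟪b, v⟫ = 0) :
    face (segment ℝ a b) v = {b} := by
  rw [segment_symm]
  exact face_seg_left b a v hb ha

/-! ### The E/F summands -/

lemma EppF_eq_pair (p : ℝ) (K : Set (Eucl 2)) (u : Eucl 2)
    (A B : {v : Eucl 2 // ‖v‖ = 1 ∧ suppFn K v = 0}) (hab : A ≠ B)
    (h0 : ∀ v, v ≠ A → v ≠ B →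
      sSup ((fun x => (max ⟪x, u⟫ 0) ^ p) '' face K v.1) = 0)
    (x y : ℝ) (hx : sSup ((fun x => (max ⟪x, u⟫ 0) ^ p) '' face K A.1) = x)
    (hy : sSup ((fun x => (max ⟪x, u⟫ 0) ^ p) '' face K B.1) = y) :
    EppF p K u = 1 / 2 * (x + y) := by
  show 1 / 2 * (∑' v : {v : Eucl 2 // ‖v‖ = 1 ∧ suppFn K v = 0},
      sSup ((fun x => (max ⟪x, u⟫ 0) ^ p) '' face K v.1)) = _
  rw [tsum_eq_pair _ A B hab h0, hx, hy]

lemma FppF_eq_pair (p : ℝ) (K : Set (Eucl 2)) (u : Eucl 2)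
    (A B : {v : Eucl 2 // ‖v‖ = 1 ∧ suppFn K v = 0}) (hab : A ≠ B)
    (h0 : ∀ v, v ≠ A → v ≠ B →
      sInf ((fun x => (max ⟪x, u⟫ 0) ^ p) '' face K v.1) = 0)
    (x y : ℝ) (hx : sInf ((fun x => (max ⟪x, u⟫ 0) ^ p) '' face K A.1) = x)
    (hy : sInf ((fun x => (max ⟪x, u⟫ 0) ^ p) '' face K B.1) = y) :
    FppF p K u = 1 / 2 * (x + y) := by
  show 1 / 2 * (∑' v : {v : Eucl 2 // ‖v‖ = 1 ∧ suppFn K v = 0},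
      sInf ((fun x => (max ⟪x, u⟫ 0) ^ p) '' face K v.1)) = _
  rw [tsum_eq_pair _ A B hab h0, hx, hy]

lemma sSup_face_singleton (p : ℝ) (u a : Eucl 2) {K : Set (Eucl 2)} {v : Eucl 2}
    (h : face K v = {a}) :
    sSup ((fun x => (max ⟪x, u⟫ 0) ^ p) '' face K v) = fP p ⟪a, u⟫ := by
  rw [h, Set.image_singleton, csSup_singleton]; rfl

lemma sInf_face_singleton (p : ℝ) (u a : Eucl 2) {K : Set (Eucl 2)} {v : Eucl 2}
    (h : face K v = {a}) :
    sInf ((fun x => (max ⟪x, u⟫ 0) ^ p) '' face K v) = fP p ⟪a, u⟫ := by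
  rw [h, Set.image_singleton, csInf_singleton]; rfl

lemma sSup_face_seg {p : ℝ} (hp : 0 ≤ p) (u a b : Eucl 2) {K : Set (Eucl 2)} {v : Eucl 2}
    (h : face K v = segment ℝ a b) :
    sSup ((fun x => (max ⟪x, u⟫ 0) ^ p) '' face K v) = fP p (max ⟪a, u⟫ ⟪b, u⟫) := by
  rw [h, show segment ℝ a b = convexHull ℝ {a, b} from (convexHull_pair (𝕜 := ℝ) a b).symm]
  exact sSup_image_hull (fP p) (fP_mono hp) {a, b} u _ (pair_hmem_max a b u) (pair_hub_max a b u)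

lemma sInf_face_seg {p : ℝ} (hp : 0 ≤ p) (u a b : Eucl 2) {K : Set (Eucl 2)} {v : Eucl 2}
    (h : face K v = segment ℝ a b) :
    sInf ((fun x => (max ⟪x, u⟫ 0) ^ p) '' face K v) = fP p (min ⟪a, u⟫ ⟪b, u⟫) := by
  rw [h, show segment ℝ a b = convexHull ℝ {a, b} from (convexHull_pair (𝕜 := ℝ) a b).symm]
  exact sInf_image_hull (fP p) (fP_mono hp) {a, b} u _ (pair_hmem_min a b u) (pair_hlb_min a b u)

/-! ### Minus versions via `-u` -/

lemma ImpF_eq (p : ℝ) (K : Set (Eucl 2)) (u : Eucl 2) : ImpF p K u = IppF p K (-u) := by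
  have hfun : (fun x : Eucl 2 => (max ⟪x, -u⟫ 0) ^ p) = fun x => (max (-⟪x, u⟫) 0) ^ p := by
    funext x; rw [inner_neg_right]
  show sSup ((fun x => (max (-⟪x, u⟫) 0) ^ p) '' K) = sSup ((fun x => (max ⟪x, -u⟫ 0) ^ p) '' K)
  rw [hfun]

lemma JmpF_eq (p : ℝ) (K : Set (Eucl 2)) (u : Eucl 2) : JmpF p K u = JppF p K (-u) := by
  have hfun : (fun x : Eucl 2 => (max ⟪x, -u⟫ 0) ^ p) = fun x => (max (-⟪x, u⟫) 0) ^ p := by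
    funext x; rw [inner_neg_right]
  show sInf ((fun x => (max (-⟪x, u⟫) 0) ^ p) '' K) = sInf ((fun x => (max ⟪x, -u⟫ 0) ^ p) '' K)
  rw [hfun]

lemma EmpF_eq (p : ℝ) (K : Set (Eucl 2)) (u : Eucl 2) : EmpF p K u = EppF p K (-u) := by
  have hfun : (fun x : Eucl 2 => (max ⟪x, -u⟫ 0) ^ p) = fun x => (max (-⟪x, u⟫) 0) ^ p := by
    funext x; rw [inner_neg_right]
  show (1 / 2 : ℝ) * ∑' v : {v : Eucl 2 // ‖v‖ = 1 ∧ suppFn K v = 0},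
      sSup ((fun x => (max (-⟪x, u⟫) 0) ^ p) '' face K v.1)
    = (1 / 2 : ℝ) * ∑' v : {v : Eucl 2 // ‖v‖ = 1 ∧ suppFn K v = 0},
      sSup ((fun x => (max ⟪x, -u⟫ 0) ^ p) '' face K v.1)
  rw [hfun]

lemma FmpF_eq (p : ℝ) (K : Set (Eucl 2)) (u : Eucl 2) : FmpF p K u = FppF p K (-u) := by
  have hfun : (fun x : Eucl 2 => (max ⟪x, -u⟫ 0) ^ p) = fun x => (max (-⟪x, u⟫) 0) ^ p := by
    funext x; rw [inner_neg_right]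
  show (1 / 2 : ℝ) * ∑' v : {v : Eucl 2 // ‖v‖ = 1 ∧ suppFn K v = 0},
      sInf ((fun x => (max (-⟪x, u⟫) 0) ^ p) '' face K v.1)
    = (1 / 2 : ℝ) * ∑' v : {v : Eucl 2 // ‖v‖ = 1 ∧ suppFn K v = 0},
      sInf ((fun x => (max ⟪x, -u⟫ 0) ^ p) '' face K v.1)
  rw [hfun]

end St8

namespace St8
open Set

lemma nev12 : (-ev1 : Eucl 2) ≠ -ev2 := by
  intro h
  have := congrArg (fun w : Eucl 2 => w 0) h
  simp at this

lemma ev2_ne_neg : (ev2 : Eucl 2) ≠ -ev2 := by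
  intro h
  have := congrArg (fun w : Eucl 2 => w 1) h
  simp at this
  linarith

/-! ### The base segment `S = [0, e₁]` -/

lemma suppFn_S (v : Eucl 2) : suppFn (segment ℝ (0 : Eucl 2) ev1) v = max 0 (v 0) := by
  rw [suppFn_seg]; simp

lemma face_S_pos : face (segment ℝ (0 : Eucl 2) ev1) ev2 = segment ℝ (0 : Eucl 2) ev1 :=
  face_seg_both 0 ev1 ev2 (by simp) (by simp)

lemma face_S_neg : face (segment ℝ (0 : Eucl 2) ev1) (-ev2) = segment ℝ (0 : Eucl 2) ev1 :=
  face_seg_both 0 ev1 (-ev2) (by simp) (by simp)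

lemma face_S_arc {v : Eucl 2} (h : v 0 < 0) :
    face (segment ℝ (0 : Eucl 2) ev1) v = {0} :=
  face_seg_left 0 ev1 v (by simp) (by simpa using h)

lemma S_arc {v : Eucl 2} (hv : ‖v‖ = 1) (hs : suppFn (segment ℝ (0 : Eucl 2) ev1) v = 0)
    (h2 : v ≠ ev2) (h3 : v ≠ -ev2) : v 0 < 0 := by
  rw [suppFn_S] at hs
  have hle : v 0 ≤ 0 := by rw [← hs]; exact le_max_right _ _
  rcases lt_or_eq_of_le hle with h | h
  · exact h
  · exfalso
    have hsq := sq_sum_of_norm_one hv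
    have : v 1 * v 1 = 1 := by nlinarith
    rcases mul_self_eq_one_iff.mp this with h' | h'
    · exact h2 (ext2 (by simp [h]) (by simp [h']))
    · exact h3 (ext2 (by simp [h]) (by simp [h']))

lemma IppF_S {p : ℝ} (hp : 0 ≤ p) (u : Eucl 2) :
    IppF p (segment ℝ (0 : Eucl 2) ev1) u = fP p (max 0 (u 0)) := by
  rw [IppF_seg hp]; simp

lemma JppF_S {p : ℝ} (hp : 0 ≤ p) (u : Eucl 2) :
    JppF p (segment ℝ (0 : Eucl 2) ev1) u = fP p (min 0 (u 0)) := by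
  rw [JppF_seg hp]; simp

lemma EppF_S {p : ℝ} (hp : 0 ≤ p) (hpne : p ≠ 0) (u : Eucl 2) :
    EppF p (segment ℝ (0 : Eucl 2) ev1) u = IppF p (segment ℝ (0 : Eucl 2) ev1) u := by
  have hA : ‖ev2‖ = 1 ∧ suppFn (segment ℝ (0 : Eucl 2) ev1) ev2 = 0 :=
    ⟨norm_ev2, by rw [suppFn_S]; simp⟩
  have hB : ‖-ev2‖ = 1 ∧ suppFn (segment ℝ (0 : Eucl 2) ev1) (-ev2) = 0 :=
    ⟨by simp, by rw [suppFn_S]; simp⟩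
  have hAB : (⟨ev2, hA⟩ : {v : Eucl 2 // ‖v‖ = 1 ∧
        suppFn (segment ℝ (0 : Eucl 2) ev1) v = 0}) ≠ ⟨-ev2, hB⟩ :=
    fun h => ev2_ne_neg (congrArg Subtype.val h)
  have h0 : ∀ v, v ≠ (⟨ev2, hA⟩ : {v : Eucl 2 // ‖v‖ = 1 ∧
        suppFn (segment ℝ (0 : Eucl 2) ev1) v = 0}) → v ≠ ⟨-ev2, hB⟩ →
      sSup ((fun x => (max ⟪x, u⟫ 0) ^ p) '' face (segment ℝ (0 : Eucl 2) ev1) v.1) = 0 := by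
    intro v hv1 hv2
    have harc : v.1 0 < 0 := S_arc v.2.1 v.2.2
      (fun h => hv1 (Subtype.ext h)) (fun h => hv2 (Subtype.ext h))
    rw [sSup_face_singleton p u 0 (face_S_arc harc), inner_zero_left, fP_zero hpne]
  have hx : sSup ((fun x => (max ⟪x, u⟫ 0) ^ p) ''
      face (segment ℝ (0 : Eucl 2) ev1) ev2) = IppF p (segment ℝ (0 : Eucl 2) ev1) u := by
    rw [face_S_pos]; rfl
  have hy : sSup ((fun x => (max ⟪x, u⟫ 0) ^ p) ''
      face (segment ℝ (0 : Eucl 2) ev1) (-ev2)) = IppF p (segment ℝ (0 : Eucl 2) ev1) u := by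
    rw [face_S_neg]; rfl
  rw [EppF_eq_pair p _ u _ _ hAB h0 _ _ hx hy]
  ring

lemma FppF_S {p : ℝ} (hp : 0 ≤ p) (hpne : p ≠ 0) (u : Eucl 2) :
    FppF p (segment ℝ (0 : Eucl 2) ev1) u = JppF p (segment ℝ (0 : Eucl 2) ev1) u := by
  have hA : ‖ev2‖ = 1 ∧ suppFn (segment ℝ (0 : Eucl 2) ev1) ev2 = 0 :=
    ⟨norm_ev2, by rw [suppFn_S]; simp⟩
  have hB : ‖-ev2‖ = 1 ∧ suppFn (segment ℝ (0 : Eucl 2) ev1) (-ev2) = 0 :=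
    ⟨by simp, by rw [suppFn_S]; simp⟩
  have hAB : (⟨ev2, hA⟩ : {v : Eucl 2 // ‖v‖ = 1 ∧
        suppFn (segment ℝ (0 : Eucl 2) ev1) v = 0}) ≠ ⟨-ev2, hB⟩ :=
    fun h => ev2_ne_neg (congrArg Subtype.val h)
  have h0 : ∀ v, v ≠ (⟨ev2, hA⟩ : {v : Eucl 2 // ‖v‖ = 1 ∧
        suppFn (segment ℝ (0 : Eucl 2) ev1) v = 0}) → v ≠ ⟨-ev2, hB⟩ →
      sInf ((fun x => (max ⟪x, u⟫ 0) ^ p) '' face (segment ℝ (0 : Eucl 2) ev1) v.1) = 0 := by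
    intro v hv1 hv2
    have harc : v.1 0 < 0 := S_arc v.2.1 v.2.2
      (fun h => hv1 (Subtype.ext h)) (fun h => hv2 (Subtype.ext h))
    rw [sInf_face_singleton p u 0 (face_S_arc harc), inner_zero_left, fP_zero hpne]
  have hx : sInf ((fun x => (max ⟪x, u⟫ 0) ^ p) ''
      face (segment ℝ (0 : Eucl 2) ev1) ev2) = JppF p (segment ℝ (0 : Eucl 2) ev1) u := by
    rw [face_S_pos]; rfl
  have hy : sInf ((fun x => (max ⟪x, u⟫ 0) ^ p) ''
      face (segment ℝ (0 : Eucl 2) ev1) (-ev2)) = JppF p (segment ℝ (0 : Eucl 2) ev1) u := by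
    rw [face_S_neg]; rfl
  rw [FppF_eq_pair p _ u _ _ hAB h0 _ _ hx hy]
  ring

/-! ### The tilted segment `S'_t = [t e₂, e₁]` -/

lemma suppFn_S' (t : ℝ) (v : Eucl 2) :
    suppFn (segment ℝ (t • ev2) ev1) v = max (t * v 1) (v 0) := by
  rw [suppFn_seg]; simp [real_inner_smul_left]

lemma S'_index {t : ℝ} (ht : 0 < t) {v : Eucl 2} (hv : ‖v‖ = 1)
    (hs : suppFn (segment ℝ (t • ev2) ev1) v = 0) : v = -ev1 ∨ v = -ev2 := by
  rw [suppFn_S'] at hs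
  have h1 : t * v 1 ≤ 0 := by rw [← hs]; exact le_max_left _ _
  have h2 : v 0 ≤ 0 := by rw [← hs]; exact le_max_right _ _
  have hsq := sq_sum_of_norm_one hv
  rcases max_choice (t * v 1) (v 0) with h | h <;> rw [h] at hs
  · left
    have hv1 : v 1 = 0 := by
      rcases mul_eq_zero.mp hs with h' | h'
      · exact absurd h' (ne_of_gt ht)
      · exact h'
    have : v 0 * v 0 = 1 := by nlinarith
    rcases mul_self_eq_one_iff.mp this with h' | h'
    · linarith
    · exact ext2 (by simp [h']) (by simp [hv1])
  · right
    have : v 1 * v 1 = 1 := by nlinarith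
    rcases mul_self_eq_one_iff.mp this with h' | h'
    · nlinarith
    · exact ext2 (by simp [hs]) (by simp [h'])

lemma face_S'_1 (t : ℝ) : face (segment ℝ (t • ev2) ev1) (-ev1) = {t • ev2} :=
  face_seg_left _ _ _ (by simp [real_inner_smul_left]) (by simp)

lemma face_S'_2 {t : ℝ} (ht : 0 < t) : face (segment ℝ (t • ev2) ev1) (-ev2) = {ev1} :=
  face_seg_right _ _ _ (by simp [real_inner_smul_left]; linarith) (by simp)

lemma IppF_S' {p : ℝ} (hp : 0 ≤ p) (t : ℝ) (u : Eucl 2) :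
    IppF p (segment ℝ (t • ev2) ev1) u = fP p (max (t * u 1) (u 0)) := by
  rw [IppF_seg hp]; simp [real_inner_smul_left]

lemma JppF_S' {p : ℝ} (hp : 0 ≤ p) (t : ℝ) (u : Eucl 2) :
    JppF p (segment ℝ (t • ev2) ev1) u = fP p (min (t * u 1) (u 0)) := by
  rw [JppF_seg hp]; simp [real_inner_smul_left]

lemma EppF_S' {p t : ℝ} (ht : 0 < t) (u : Eucl 2) :
    EppF p (segment ℝ (t • ev2) ev1) u = 1 / 2 * (fP p (t * u 1) + fP p (u 0)) := by
  have hA : ‖-ev1‖ = 1 ∧ suppFn (segment ℝ (t • ev2) ev1) (-ev1) = 0 :=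
    ⟨by simp, by rw [suppFn_S']; norm_num⟩
  have hB : ‖-ev2‖ = 1 ∧ suppFn (segment ℝ (t • ev2) ev1) (-ev2) = 0 :=
    ⟨by simp, by rw [suppFn_S']; simp; linarith⟩
  have hAB : (⟨-ev1, hA⟩ : {v : Eucl 2 // ‖v‖ = 1 ∧
        suppFn (segment ℝ (t • ev2) ev1) v = 0}) ≠ ⟨-ev2, hB⟩ :=
    fun h => nev12 (congrArg Subtype.val h)
  have h0 : ∀ v, v ≠ (⟨-ev1, hA⟩ : {v : Eucl 2 // ‖v‖ = 1 ∧
        suppFn (segment ℝ (t • ev2) ev1) v = 0}) → v ≠ ⟨-ev2, hB⟩ →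
      sSup ((fun x => (max ⟪x, u⟫ 0) ^ p) '' face (segment ℝ (t • ev2) ev1) v.1) = 0 := by
    intro v hv1 hv2
    rcases S'_index ht v.2.1 v.2.2 with h | h
    · exact absurd (Subtype.ext h) hv1
    · exact absurd (Subtype.ext h) hv2
  have hx : sSup ((fun x => (max ⟪x, u⟫ 0) ^ p) ''
      face (segment ℝ (t • ev2) ev1) (-ev1)) = fP p (t * u 1) := by
    rw [sSup_face_singleton p u (t • ev2) (face_S'_1 t), real_inner_smul_left, inner_ev2_left]
  have hy : sSup ((fun x => (max ⟪x, u⟫ 0) ^ p) ''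
      face (segment ℝ (t • ev2) ev1) (-ev2)) = fP p (u 0) := by
    rw [sSup_face_singleton p u ev1 (face_S'_2 ht), inner_ev1_left]
  exact EppF_eq_pair p _ u _ _ hAB h0 _ _ hx hy

lemma FppF_S' {p t : ℝ} (ht : 0 < t) (u : Eucl 2) :
    FppF p (segment ℝ (t • ev2) ev1) u = 1 / 2 * (fP p (t * u 1) + fP p (u 0)) := by
  have hA : ‖-ev1‖ = 1 ∧ suppFn (segment ℝ (t • ev2) ev1) (-ev1) = 0 :=
    ⟨by simp, by rw [suppFn_S']; norm_num⟩
  have hB : ‖-ev2‖ = 1 ∧ suppFn (segment ℝ (t • ev2) ev1) (-ev2) = 0 :=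
    ⟨by simp, by rw [suppFn_S']; simp; linarith⟩
  have hAB : (⟨-ev1, hA⟩ : {v : Eucl 2 // ‖v‖ = 1 ∧
        suppFn (segment ℝ (t • ev2) ev1) v = 0}) ≠ ⟨-ev2, hB⟩ :=
    fun h => nev12 (congrArg Subtype.val h)
  have h0 : ∀ v, v ≠ (⟨-ev1, hA⟩ : {v : Eucl 2 // ‖v‖ = 1 ∧
        suppFn (segment ℝ (t • ev2) ev1) v = 0}) → v ≠ ⟨-ev2, hB⟩ →
      sInf ((fun x => (max ⟪x, u⟫ 0) ^ p) '' face (segment ℝ (t • ev2) ev1) v.1) = 0 := by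
    intro v hv1 hv2
    rcases S'_index ht v.2.1 v.2.2 with h | h
    · exact absurd (Subtype.ext h) hv1
    · exact absurd (Subtype.ext h) hv2
  have hx : sInf ((fun x => (max ⟪x, u⟫ 0) ^ p) ''
      face (segment ℝ (t • ev2) ev1) (-ev1)) = fP p (t * u 1) := by
    rw [sInf_face_singleton p u (t • ev2) (face_S'_1 t), real_inner_smul_left, inner_ev2_left]
  have hy : sInf ((fun x => (max ⟪x, u⟫ 0) ^ p) ''
      face (segment ℝ (t • ev2) ev1) (-ev2)) = fP p (u 0) := by
    rw [sInf_face_singleton p u ev1 (face_S'_2 ht), inner_ev1_left]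
  exact FppF_eq_pair p _ u _ _ hAB h0 _ _ hx hy

end St8

namespace St8
open Set

lemma suppFn_T (t : ℝ) (v : Eucl 2) :
    suppFn (convexHull ℝ {0, ev1, t • ev2}) v = max (max 0 (v 0)) (t * v 1) := by
  rw [suppFn_tri]; simp [real_inner_smul_left]

lemma box_sub {t : ℝ} (ht : 0 < t) :
    convexHull ℝ {0, ev1, t • ev2} ⊆
      {x : Eucl 2 | 0 ≤ x 0 ∧ 0 ≤ x 1 ∧ x 0 ≤ 1 ∧ x 1 ≤ t} := by
  apply convexHull_min
  · rintro x (rfl | rfl | rfl)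
    · simp [ht.le]
    · simp [ht.le]
    · simp [ht.le]
  · rintro x hx y hy α β hα hβ hab
    simp only [Set.mem_setOf_eq, PiLp.add_apply, smulp_apply] at *
    exact ⟨by nlinarith [hx.1, hy.1], by nlinarith [hx.2.1, hy.2.1],
      by nlinarith [hx.2.2.1, hy.2.2.1], by nlinarith [hx.2.2.2, hy.2.2.2]⟩

lemma seg_sub_T (t : ℝ) : segment ℝ (0 : Eucl 2) ev1 ⊆ convexHull ℝ {0, ev1, t • ev2} := by
  rw [← convexHull_pair (𝕜 := ℝ)]
  exact convexHull_mono (by intro z hz; rcases hz with rfl | hz <;> simp_all)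

lemma seg2_sub_T (t : ℝ) : segment ℝ (0 : Eucl 2) (t • ev2) ⊆ convexHull ℝ {0, ev1, t • ev2} := by
  rw [← convexHull_pair (𝕜 := ℝ)]
  exact convexHull_mono (by intro z hz; rcases hz with rfl | hz <;> simp_all)

lemma face_T_e2 {t : ℝ} (ht : 0 < t) :
    face (convexHull ℝ {0, ev1, t • ev2}) (-ev2) = segment ℝ (0 : Eucl 2) ev1 := by
  have hsupp : suppFn (convexHull ℝ {0, ev1, t • ev2}) (-ev2) = 0 := by
    rw [suppFn_T]; simp; linarith
  apply Set.eq_of_subset_of_subset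
  · rintro x ⟨hx, hxv⟩
    rw [hsupp, inner2] at hxv
    simp at hxv
    obtain ⟨hb0, hb1, hb2, hb3⟩ := box_sub ht hx
    rw [mem_seg0]
    exact ⟨x 0, hb0, hb2, ext2 (by simp) (by simp [hxv])⟩
  · intro x hx
    refine ⟨seg_sub_T t hx, ?_⟩
    rw [hsupp, inner2]
    obtain ⟨θ, h0, h1, rfl⟩ := mem_seg0.mp hx
    simp

lemma face_T_e1 {t : ℝ} (ht : 0 < t) :
    face (convexHull ℝ {0, ev1, t • ev2}) (-ev1) = segment ℝ (0 : Eucl 2) (t • ev2) := by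
  have hsupp : suppFn (convexHull ℝ {0, ev1, t • ev2}) (-ev1) = 0 := by
    rw [suppFn_T]; simp
  apply Set.eq_of_subset_of_subset
  · rintro x ⟨hx, hxv⟩
    rw [hsupp, inner2] at hxv
    simp at hxv
    obtain ⟨hb0, hb1, hb2, hb3⟩ := box_sub ht hx
    rw [mem_seg0]
    refine ⟨x 1 / t, div_nonneg hb1 ht.le, (div_le_one ht).mpr hb3,
      ext2 (by simp [hxv]) (by simp; field_simp)⟩
  · intro x hx
    refine ⟨seg2_sub_T t hx, ?_⟩
    rw [hsupp, inner2]
    obtain ⟨θ, h0, h1, rfl⟩ := mem_seg0.mp hx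
    simp

lemma face_T_arc {t : ℝ} (ht : 0 < t) {v : Eucl 2} (h0 : v 0 < 0) (h1 : v 1 < 0) :
    face (convexHull ℝ {0, ev1, t • ev2}) v = {0} := by
  have hsupp : suppFn (convexHull ℝ {0, ev1, t • ev2}) v = 0 := by
    rw [suppFn_T, max_eq_left h0.le, max_eq_left (mul_neg_of_pos_of_neg ht h1).le]
  apply Set.eq_of_subset_of_subset
  · rintro x ⟨hx, hxv⟩
    rw [hsupp, inner2] at hxv
    obtain ⟨hb0, hb1, hb2, hb3⟩ := box_sub ht hx
    have hx0 : x 0 = 0 := by nlinarith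
    have hx1 : x 1 = 0 := by nlinarith
    exact ext2 (by simp [hx0]) (by simp [hx1])
  · rw [Set.singleton_subset_iff]
    exact ⟨subset_convexHull ℝ _ (by simp), by rw [hsupp]; simp⟩

lemma T_index {t : ℝ} (ht : 0 < t) {v : Eucl 2} (hv : ‖v‖ = 1)
    (hs : suppFn (convexHull ℝ {0, ev1, t • ev2}) v = 0)
    (hne1 : v ≠ -ev1) (hne2 : v ≠ -ev2) : v 0 < 0 ∧ v 1 < 0 := by
  rw [suppFn_T] at hs
  have h1 : t * v 1 ≤ 0 := by
    have h' := le_max_right (max 0 (v 0)) (t * v 1)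
    rwa [hs] at h'
  have h2 : v 0 ≤ 0 := by
    have h' := le_max_left (max 0 (v 0)) (t * v 1)
    rw [hs] at h'
    exact le_trans (le_max_right _ _) h'
  have hv1 : v 1 ≤ 0 := by nlinarith
  have hsq := sq_sum_of_norm_one hv
  constructor
  · rcases lt_or_eq_of_le h2 with h | h
    · exact h
    · exfalso
      have : v 1 * v 1 = 1 := by nlinarith
      rcases mul_self_eq_one_iff.mp this with h' | h'
      · linarith
      · exact hne2 (ext2 (by simp [h]) (by simp [h']))
  · rcases lt_or_eq_of_le hv1 with h | h
    · exact h
    · exfalso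
      have : v 0 * v 0 = 1 := by nlinarith
      rcases mul_self_eq_one_iff.mp this with h' | h'
      · linarith
      · exact hne1 (ext2 (by simp [h']) (by simp [h]))

lemma IppF_T {p : ℝ} (hp : 0 ≤ p) (t : ℝ) (u : Eucl 2) :
    IppF p (convexHull ℝ {0, ev1, t • ev2}) u = fP p (max (max 0 (u 0)) (t * u 1)) := by
  rw [IppF_tri hp]; simp [real_inner_smul_left]

lemma JppF_T {p : ℝ} (hp : 0 ≤ p) (hpne : p ≠ 0) (t : ℝ) (u : Eucl 2) :
    JppF p (convexHull ℝ {0, ev1, t • ev2}) u = 0 := by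
  rw [JppF_tri hp]
  refine fP_nonpos hpne (le_trans (min_le_left _ _) ?_)
  rw [inner_zero_left]
  exact min_le_left _ _

lemma EppF_T {p t : ℝ} (hp : 0 ≤ p) (hpne : p ≠ 0) (ht : 0 < t) (u : Eucl 2) :
    EppF p (convexHull ℝ {0, ev1, t • ev2}) u
      = 1 / 2 * (fP p (max 0 (t * u 1)) + fP p (max 0 (u 0))) := by
  have hA : ‖-ev1‖ = 1 ∧ suppFn (convexHull ℝ {0, ev1, t • ev2}) (-ev1) = 0 :=
    ⟨by simp, by rw [suppFn_T]; simp⟩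
  have hB : ‖-ev2‖ = 1 ∧ suppFn (convexHull ℝ {0, ev1, t • ev2}) (-ev2) = 0 :=
    ⟨by simp, by rw [suppFn_T]; simp; linarith⟩
  have hAB : (⟨-ev1, hA⟩ : {v : Eucl 2 // ‖v‖ = 1 ∧
        suppFn (convexHull ℝ {0, ev1, t • ev2}) v = 0}) ≠ ⟨-ev2, hB⟩ :=
    fun h => nev12 (congrArg Subtype.val h)
  have h0 : ∀ v, v ≠ (⟨-ev1, hA⟩ : {v : Eucl 2 // ‖v‖ = 1 ∧
        suppFn (convexHull ℝ {0, ev1, t • ev2}) v = 0}) → v ≠ ⟨-ev2, hB⟩ →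
      sSup ((fun x => (max ⟪x, u⟫ 0) ^ p) ''
        face (convexHull ℝ {0, ev1, t • ev2}) v.1) = 0 := by
    intro v hv1 hv2
    obtain ⟨ha, hb⟩ := T_index ht v.2.1 v.2.2
      (fun h => hv1 (Subtype.ext h)) (fun h => hv2 (Subtype.ext h))
    rw [sSup_face_singleton p u 0 (face_T_arc ht ha hb), inner_zero_left, fP_zero hpne]
  have hx : sSup ((fun x => (max ⟪x, u⟫ 0) ^ p) ''
      face (convexHull ℝ {0, ev1, t • ev2}) (-ev1)) = fP p (max 0 (t * u 1)) := by
    rw [sSup_face_seg hp u 0 (t • ev2) (face_T_e1 ht), inner_zero_left,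
      real_inner_smul_left, inner_ev2_left]
  have hy : sSup ((fun x => (max ⟪x, u⟫ 0) ^ p) ''
      face (convexHull ℝ {0, ev1, t • ev2}) (-ev2)) = fP p (max 0 (u 0)) := by
    rw [sSup_face_seg hp u 0 ev1 (face_T_e2 ht), inner_zero_left, inner_ev1_left]
  exact EppF_eq_pair p _ u _ _ hAB h0 _ _ hx hy

lemma FppF_T {p t : ℝ} (hp : 0 ≤ p) (hpne : p ≠ 0) (ht : 0 < t) (u : Eucl 2) :
    FppF p (convexHull ℝ {0, ev1, t • ev2}) u = 0 := by
  have hA : ‖-ev1‖ = 1 ∧ suppFn (convexHull ℝ {0, ev1, t • ev2}) (-ev1) = 0 :=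
    ⟨by simp, by rw [suppFn_T]; simp⟩
  have hB : ‖-ev2‖ = 1 ∧ suppFn (convexHull ℝ {0, ev1, t • ev2}) (-ev2) = 0 :=
    ⟨by simp, by rw [suppFn_T]; simp; linarith⟩
  have hAB : (⟨-ev1, hA⟩ : {v : Eucl 2 // ‖v‖ = 1 ∧
        suppFn (convexHull ℝ {0, ev1, t • ev2}) v = 0}) ≠ ⟨-ev2, hB⟩ :=
    fun h => nev12 (congrArg Subtype.val h)
  have h0 : ∀ v, v ≠ (⟨-ev1, hA⟩ : {v : Eucl 2 // ‖v‖ = 1 ∧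
        suppFn (convexHull ℝ {0, ev1, t • ev2}) v = 0}) → v ≠ ⟨-ev2, hB⟩ →
      sInf ((fun x => (max ⟪x, u⟫ 0) ^ p) ''
        face (convexHull ℝ {0, ev1, t • ev2}) v.1) = 0 := by
    intro v hv1 hv2
    obtain ⟨ha, hb⟩ := T_index ht v.2.1 v.2.2
      (fun h => hv1 (Subtype.ext h)) (fun h => hv2 (Subtype.ext h))
    rw [sInf_face_singleton p u 0 (face_T_arc ht ha hb), inner_zero_left, fP_zero hpne]
  have hx : sInf ((fun x => (max ⟪x, u⟫ 0) ^ p) ''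
      face (convexHull ℝ {0, ev1, t • ev2}) (-ev1)) = 0 := by
    rw [sInf_face_seg hp u 0 (t • ev2) (face_T_e1 ht), inner_zero_left]
    exact fP_nonpos hpne (min_le_left _ _)
  have hy : sInf ((fun x => (max ⟪x, u⟫ 0) ^ p) ''
      face (convexHull ℝ {0, ev1, t • ev2}) (-ev2)) = 0 := by
    rw [sInf_face_seg hp u 0 ev1 (face_T_e2 ht), inner_zero_left]
    exact fP_nonpos hpne (min_le_left _ _)
  rw [FppF_eq_pair p _ u _ _ hAB h0 _ _ hx hy]
  ring

end St8

namespace St8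
open Set Metric

lemma isPolytope_seg (a b : Eucl 2) : IsPolytope (segment ℝ a b) := by
  classical
  refine ⟨{a, b}, ⟨a, by simp⟩, ?_⟩
  rw [← convexHull_pair (𝕜 := ℝ)]
  congr 1
  simp

lemma isPolytope_tri (a b c : Eucl 2) : IsPolytope (convexHull ℝ {a, b, c}) := by
  classical
  refine ⟨{a, b, c}, ⟨a, by simp⟩, ?_⟩
  congr 1
  simp

lemma hd_seg {t : ℝ} (ht : 0 < t) :
    hausdorffDist (segment ℝ (t • ev2) ev1) (segment ℝ (0 : Eucl 2) ev1) ≤ t := by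
  apply hausdorffDist_le_of_mem_dist ht.le
  · intro x hx
    rw [segment_eq_image] at hx
    obtain ⟨θ, ⟨h0, h1⟩, rfl⟩ := hx
    refine ⟨θ • ev1, mem_seg0.mpr ⟨θ, h0, h1, rfl⟩, ?_⟩
    rw [dist_eq_norm]
    have he : (1 - θ) • (t • ev2) + θ • ev1 - θ • ev1 = (1 - θ) • (t • ev2) := by
      abel
    rw [he, norm_smul, norm_smul, norm_ev2, Real.norm_eq_abs, Real.norm_eq_abs,
      abs_of_nonneg (by linarith : (0:ℝ) ≤ 1 - θ), abs_of_nonneg ht.le]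
    nlinarith
  · intro y hy
    obtain ⟨θ, h0, h1, rfl⟩ := mem_seg0.mp hy
    refine ⟨(1 - θ) • (t • ev2) + θ • ev1, by rw [segment_eq_image]; exact ⟨θ, ⟨h0, h1⟩, rfl⟩, ?_⟩
    rw [dist_eq_norm]
    have he : θ • ev1 - ((1 - θ) • (t • ev2) + θ • ev1) = -((1 - θ) • (t • ev2)) := by
      abel
    rw [he, norm_neg, norm_smul, norm_smul, norm_ev2, Real.norm_eq_abs, Real.norm_eq_abs,
      abs_of_nonneg (by linarith : (0:ℝ) ≤ 1 - θ), abs_of_nonneg ht.le]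
    nlinarith

lemma hd_tri {t : ℝ} (ht : 0 < t) :
    hausdorffDist (convexHull ℝ {0, ev1, t • ev2}) (segment ℝ (0 : Eucl 2) ev1) ≤ t := by
  apply hausdorffDist_le_of_mem_dist ht.le
  · intro x hx
    obtain ⟨hb0, hb1, hb2, hb3⟩ := box_sub ht hx
    refine ⟨(x 0) • ev1, mem_seg0.mpr ⟨x 0, hb0, hb2, rfl⟩, ?_⟩
    rw [dist_eq_norm, norm2]
    have e0 : (x - (x 0) • ev1) 0 = 0 := by simp [PiLp.sub_apply]
    have e1 : (x - (x 0) • ev1) 1 = x 1 := by simp [PiLp.sub_apply]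
    rw [e0, e1]
    have : Real.sqrt (0 ^ 2 + x 1 ^ 2) = |x 1| := by
      rw [show (0:ℝ) ^ 2 + x 1 ^ 2 = x 1 ^ 2 by ring, Real.sqrt_sq_eq_abs]
    rw [this, abs_of_nonneg hb1]
    exact hb3
  · intro y hy
    exact ⟨y, seg_sub_T t hy, by rw [dist_self]; exact ht.le⟩

lemma sphSup_ge {f : Eucl 2 → ℝ} {C : ℝ} (hbdd : ∀ u : Eucl 2, ‖u‖ = 1 → |f u| ≤ C)
    {u₀ : Eucl 2} (hu₀ : ‖u₀‖ = 1) : |f u₀| ≤ sphSup f := by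
  have hb : BddAbove (Set.range fun u : Metric.sphere (0 : Eucl 2) 1 => |f u.1|) := by
    refine ⟨C, ?_⟩
    rintro y ⟨u, rfl⟩
    exact hbdd u.1 (by simpa using mem_sphere_zero_iff_norm.mp u.2)
  exact le_ciSup hb ⟨u₀, by simpa [mem_sphere_zero_iff_norm] using hu₀⟩

lemma eq_zero_of_forall_abs_lt {c : ℝ} (h : ∀ ε > (0:ℝ), |c| < ε) : c = 0 := by
  by_contra hc
  exact absurd (h |c| (abs_pos.mpr hc)) (lt_irrefl _)

lemma min_eq_add_sub_max (a b : ℝ) : min a b = a + b - max a b := by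
  rcases le_total a b with h | h <;> simp [min_eq_left, min_eq_right, max_eq_left, max_eq_right, h] <;> ring

end St8

/-- The only linear combination of the four maps
`P ↦ h(I_p⁺P,·)^p − h(E_p⁺P,·)^p`, `P ↦ h(I_p⁻P,·)^p − h(E_p⁻P,·)^p`,
`P ↦ h(I_p⁺P,·)^p − h(E_p⁺P,·)^p + J_p⁺P − F_p⁺P` and
`P ↦ h(I_p⁻P,·)^p − h(E_p⁻P,·)^p + J_p⁻P − F_p⁻P` (as maps from `𝒫²` to `C_p(ℝ²)`)
that is continuous at the line segment `[o, e₁]` is the trivial one. -/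
theorem statement_8 (p : ℝ) (hp : 1 < p) (c₁ c₂ c₃ c₄ : ℝ)
    (G : Set (Eucl 2) → Eucl 2 → ℝ)
    (hG : ∀ (P : Set (Eucl 2)) (u : Eucl 2),
      G P u = c₁ * (IppF p P u - EppF p P u) + c₂ * (ImpF p P u - EmpF p P u) +
        c₃ * (IppF p P u - EppF p P u + JppF p P u - FppF p P u) +
        c₄ * (ImpF p P u - EmpF p P u + JmpF p P u - FmpF p P u))
    (hcont : ∀ ε > (0:ℝ), ∃ δ > (0:ℝ), ∀ P : Set (Eucl 2), IsPolytope P →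
      hausdorffDist P (segment ℝ (0 : Eucl 2) (EuclideanSpace.single (0 : Fin 2) (1:ℝ))) < δ →
      sphSup (fun u =>
        G P u - G (segment ℝ (0 : Eucl 2) (EuclideanSpace.single (0 : Fin 2) (1:ℝ))) u) < ε) :
    c₁ = 0 ∧ c₂ = 0 ∧ c₃ = 0 ∧ c₄ = 0 := by
  classical
  have hp0 : (0:ℝ) ≤ p := by linarith
  have hpne : p ≠ 0 := by positivity
  have hev : EuclideanSpace.single (0 : Fin 2) (1:ℝ) = St8.ev1 := rfl
  rw [hev] at hcont
  -- G vanishes on the limit segment S = [0, e₁]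
  have hGS : ∀ u, G (segment ℝ (0 : Eucl 2) St8.ev1) u = 0 := by
    intro u
    rw [hG, St8.ImpF_eq, St8.JmpF_eq, St8.EmpF_eq, St8.FmpF_eq,
      St8.EppF_S hp0 hpne u, St8.EppF_S hp0 hpne (-u),
      St8.FppF_S hp0 hpne u, St8.FppF_S hp0 hpne (-u)]
    ring
  -- formula for G on the tilted segments [t e₂, e₁]
  have hGseg : ∀ t : ℝ, 0 < t → ∀ u : Eucl 2,
      G (segment ℝ (t • St8.ev2) St8.ev1) u =
        c₁ * (max (St8.fP p (t * u 1)) (St8.fP p (u 0))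
          - 1 / 2 * (St8.fP p (t * u 1) + St8.fP p (u 0)))
      + c₂ * (max (St8.fP p (t * (-u) 1)) (St8.fP p ((-u) 0))
          - 1 / 2 * (St8.fP p (t * (-u) 1) + St8.fP p ((-u) 0))) := by
    intro t ht u
    rw [hG, St8.ImpF_eq, St8.JmpF_eq, St8.EmpF_eq, St8.FmpF_eq,
      St8.IppF_S' hp0 t u, St8.IppF_S' hp0 t (-u),
      St8.JppF_S' hp0 t u, St8.JppF_S' hp0 t (-u),
      St8.EppF_S' ht u, St8.EppF_S' ht (-u),
      St8.FppF_S' ht u, St8.FppF_S' ht (-u),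
      (St8.fP_mono hp0).map_max, (St8.fP_mono hp0).map_max,
      (St8.fP_mono hp0).map_min, (St8.fP_mono hp0).map_min,
      St8.min_eq_add_sub_max, St8.min_eq_add_sub_max]
    ring
  -- values of G on tilted segments at ±e₁
  have hval1 : ∀ t : ℝ, 0 < t →
      G (segment ℝ (t • St8.ev2) St8.ev1) St8.ev1 = c₁ / 2 := by
    intro t ht
    rw [hGseg t ht]
    norm_num [St8.fP_zero hpne, St8.fP_one, St8.fP_nonpos hpne]
    try ring
  have hval2 : ∀ t : ℝ, 0 < t →
      G (segment ℝ (t • St8.ev2) St8.ev1) (-St8.ev1) = c₂ / 2 := by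
    intro t ht
    rw [hGseg t ht]
    norm_num [St8.fP_zero hpne, St8.fP_one, St8.fP_nonpos hpne]
    try ring
  -- bound for G on tilted segments over the unit sphere
  have hDb : ∀ A B : ℝ, 0 ≤ A → A ≤ 1 → 0 ≤ B → B ≤ 1 →
      |max A B - 1 / 2 * (A + B)| ≤ 1 := by
    intro A B h1 h2 h3 h4
    rw [abs_le]
    constructor
    · linarith [le_max_left A B]
    · linarith [max_le h2 h4]
  have hbound : ∀ t : ℝ, 0 < t → t ≤ 1 → ∀ u : Eucl 2, ‖u‖ = 1 →
      |G (segment ℝ (t • St8.ev2) St8.ev1) u - G (segment ℝ (0 : Eucl 2) St8.ev1) u|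
        ≤ |c₁| + |c₂| := by
    intro t ht ht1 u hu
    rw [hGS u, sub_zero, hGseg t ht u]
    have hu1 := abs_le.mp (St8.abs_coord_le hu 1)
    have hu0 := abs_le.mp (St8.abs_coord_le hu 0)
    have e1 : t * u 1 ≤ 1 := by nlinarith
    have e2 : u 0 ≤ 1 := hu0.2
    have e3 : t * (-u) 1 ≤ 1 := by simp only [St8.negp_apply]; nlinarith
    have e4 : (-u) 0 ≤ 1 := by simp only [St8.negp_apply]; linarith
    have hD1 := hDb _ _ (St8.fP_nonneg p _) (St8.fP_le_one hp0 e1)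
      (St8.fP_nonneg p _) (St8.fP_le_one hp0 e2)
    have hD2 := hDb _ _ (St8.fP_nonneg p _) (St8.fP_le_one hp0 e3)
      (St8.fP_nonneg p _) (St8.fP_le_one hp0 e4)
    refine le_trans (abs_add_le _ _) ?_
    rw [abs_mul, abs_mul]
    have m1 := mul_le_mul_of_nonneg_left hD1 (abs_nonneg c₁)
    have m2 := mul_le_mul_of_nonneg_left hD2 (abs_nonneg c₂)
    linarith
  -- stage 1 : c₁ = c₂ = 0
  have hstage1 : ∀ ε > (0:ℝ), |c₁| / 2 < ε ∧ |c₂| / 2 < ε := by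
    intro ε hε
    obtain ⟨δ, hδ, hδ'⟩ := hcont ε hε
    set t := min (δ / 2) 1 with htdef
    have ht : 0 < t := lt_min (by linarith) one_pos
    have ht1 : t ≤ 1 := min_le_right _ _
    have hdist : hausdorffDist (segment ℝ (t • St8.ev2) St8.ev1)
        (segment ℝ (0 : Eucl 2) St8.ev1) < δ :=
      lt_of_le_of_lt (St8.hd_seg ht) (lt_of_le_of_lt (min_le_left _ _) (by linarith))
    have hsph := hδ' _ (St8.isPolytope_seg _ _) hdist
    constructor
    · have h1 := St8.sphSup_ge (hbound t ht ht1) St8.norm_ev1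
      rw [hval1 t ht, hGS, sub_zero] at h1
      rw [abs_div] at h1
      norm_num at h1
      exact lt_of_le_of_lt h1 hsph
    · have h1 := St8.sphSup_ge (hbound t ht ht1) (by simp : ‖-St8.ev1‖ = 1)
      rw [hval2 t ht, hGS, sub_zero] at h1
      rw [abs_div] at h1
      norm_num at h1
      exact lt_of_le_of_lt h1 hsph
  have hc1 : c₁ = 0 := by
    apply St8.eq_zero_of_forall_abs_lt
    intro ε hε
    have := (hstage1 (ε / 2) (by linarith)).1
    linarith
  have hc2 : c₂ = 0 := by
    apply St8.eq_zero_of_forall_abs_lt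
    intro ε hε
    have := (hstage1 (ε / 2) (by linarith)).2
    linarith
  subst hc1; subst hc2
  -- formula for G on triangles conv{0, e₁, t e₂}
  have hGtri : ∀ t : ℝ, 0 < t → ∀ u : Eucl 2,
      G (convexHull ℝ {0, St8.ev1, t • St8.ev2}) u =
        c₃ * (St8.fP p (max (max 0 (u 0)) (t * u 1))
          - 1 / 2 * (St8.fP p (max 0 (t * u 1)) + St8.fP p (max 0 (u 0))))
      + c₄ * (St8.fP p (max (max 0 ((-u) 0)) (t * (-u) 1))
          - 1 / 2 * (St8.fP p (max 0 (t * (-u) 1)) + St8.fP p (max 0 ((-u) 0)))) := by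
    intro t ht u
    rw [hG, St8.ImpF_eq, St8.JmpF_eq, St8.EmpF_eq, St8.FmpF_eq,
      St8.IppF_T hp0 t u, St8.IppF_T hp0 t (-u),
      St8.JppF_T hp0 hpne t u, St8.JppF_T hp0 hpne t (-u),
      St8.EppF_T hp0 hpne ht u, St8.EppF_T hp0 hpne ht (-u),
      St8.FppF_T hp0 hpne ht u, St8.FppF_T hp0 hpne ht (-u)]
    ring
  have hvalT1 : ∀ t : ℝ, 0 < t →
      G (convexHull ℝ {0, St8.ev1, t • St8.ev2}) St8.ev1 = c₃ / 2 := by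
    intro t ht
    rw [hGtri t ht]
    norm_num [St8.fP_zero hpne, St8.fP_one, St8.fP_nonpos hpne]
    try ring
  have hvalT2 : ∀ t : ℝ, 0 < t →
      G (convexHull ℝ {0, St8.ev1, t • St8.ev2}) (-St8.ev1) = c₄ / 2 := by
    intro t ht
    rw [hGtri t ht]
    norm_num [St8.fP_zero hpne, St8.fP_one, St8.fP_nonpos hpne]
    try ring
  have hDb2 : ∀ I A B : ℝ, 0 ≤ I → I ≤ 1 → 0 ≤ A → A ≤ 1 → 0 ≤ B → B ≤ 1 →
      |I - 1 / 2 * (A + B)| ≤ 1 := by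
    intro I A B h1 h2 h3 h4 h5 h6
    rw [abs_le]
    exact ⟨by linarith, by linarith⟩
  have hboundT : ∀ t : ℝ, 0 < t → t ≤ 1 → ∀ u : Eucl 2, ‖u‖ = 1 →
      |G (convexHull ℝ {0, St8.ev1, t • St8.ev2}) u - G (segment ℝ (0 : Eucl 2) St8.ev1) u|
        ≤ |c₃| + |c₄| := by
    intro t ht ht1 u hu
    rw [hGS u, sub_zero, hGtri t ht u]
    have hu1 := abs_le.mp (St8.abs_coord_le hu 1)
    have hu0 := abs_le.mp (St8.abs_coord_le hu 0)
    have e1 : max 0 (t * u 1) ≤ 1 := max_le zero_le_one (by nlinarith)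
    have e2 : max 0 (u 0) ≤ 1 := max_le zero_le_one hu0.2
    have e0 : max (max 0 (u 0)) (t * u 1) ≤ 1 := max_le e2 (by nlinarith)
    have e3 : max 0 (t * (-u) 1) ≤ 1 := by
      simp only [St8.negp_apply]; exact max_le zero_le_one (by nlinarith)
    have e4 : max 0 ((-u) 0) ≤ 1 := by
      simp only [St8.negp_apply]; exact max_le zero_le_one (by linarith)
    have e5 : max (max 0 ((-u) 0)) (t * (-u) 1) ≤ 1 := by
      simp only [St8.negp_apply]
      exact max_le (max_le zero_le_one (by linarith)) (by nlinarith)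
    have hD1 := hDb2 _ _ _ (St8.fP_nonneg p _) (St8.fP_le_one hp0 e0)
      (St8.fP_nonneg p _) (St8.fP_le_one hp0 e1) (St8.fP_nonneg p _) (St8.fP_le_one hp0 e2)
    have hD2 := hDb2 _ _ _ (St8.fP_nonneg p _) (St8.fP_le_one hp0 e5)
      (St8.fP_nonneg p _) (St8.fP_le_one hp0 e3) (St8.fP_nonneg p _) (St8.fP_le_one hp0 e4)
    refine le_trans (abs_add_le _ _) ?_
    rw [abs_mul, abs_mul]
    have m1 := mul_le_mul_of_nonneg_left hD1 (abs_nonneg c₃)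
    have m2 := mul_le_mul_of_nonneg_left hD2 (abs_nonneg c₄)
    linarith
  have hstage2 : ∀ ε > (0:ℝ), |c₃| / 2 < ε ∧ |c₄| / 2 < ε := by
    intro ε hε
    obtain ⟨δ, hδ, hδ'⟩ := hcont ε hε
    set t := min (δ / 2) 1 with htdef
    have ht : 0 < t := lt_min (by linarith) one_pos
    have ht1 : t ≤ 1 := min_le_right _ _
    have hdist : hausdorffDist (convexHull ℝ {0, St8.ev1, t • St8.ev2})
        (segment ℝ (0 : Eucl 2) St8.ev1) < δ :=
      lt_of_le_of_lt (St8.hd_tri ht) (lt_of_le_of_lt (min_le_left _ _) (by linarith))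
    have hsph := hδ' _ (St8.isPolytope_tri _ _ _) hdist
    constructor
    · have h1 := St8.sphSup_ge (hboundT t ht ht1) St8.norm_ev1
      rw [hvalT1 t ht, hGS, sub_zero] at h1
      rw [abs_div] at h1
      norm_num at h1
      exact lt_of_le_of_lt h1 hsph
    · have h1 := St8.sphSup_ge (hboundT t ht ht1) (by simp : ‖-St8.ev1‖ = 1)
      rw [hvalT2 t ht, hGS, sub_zero] at h1
      rw [abs_div] at h1
      norm_num at h1
      exact lt_of_le_of_lt h1 hsph
  have hc3 : c₃ = 0 := by
    apply St8.eq_zero_of_forall_abs_lt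
    intro ε hε
    have := (hstage2 (ε / 2) (by linarith)).1
    linarith
  have hc4 : c₄ = 0 := by
    apply St8.eq_zero_of_forall_abs_lt
    intro ε hε
    have := (hstage2 (ε / 2) (by linarith)).2
    linarith
  exact ⟨rfl, rfl, hc3, hc4⟩
end
end

section
/- Let n ≥ 2 and p > 1. If Φ : P^n_o → C_p(R^n) is a simple GL(n)-covariant valuation which is continuous at the line segment [o, e₁], then Φ = 0. -/
open MeasureTheory Metric
open scoped RealInnerProductSpace Pointwise

noncomputable section

section Aux
variable {n : ℕ}

lemma isPolytopeO_image {P : Set (Eucl n)} (hP : IsPolytopeO P) (φ : Eucl n →ₗ[ℝ] Eucl n) :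
    IsPolytopeO (φ '' P) := by
  classical
  obtain ⟨⟨S, hS, rfl⟩, h0⟩ := hP
  refine ⟨⟨S.image φ, hS.image φ, ?_⟩, ⟨0, h0, map_zero φ⟩⟩
  rw [Finset.coe_image, ← φ.image_convexHull]

lemma isCompact_of_isPolytope {P : Set (Eucl n)} (hP : IsPolytope P) : IsCompact P := by
  obtain ⟨S, -, rfl⟩ := hP; exact S.finite_toSet.isCompact_convexHull ℝ

lemma convex_of_isPolytope {P : Set (Eucl n)} (hP : IsPolytope P) : Convex ℝ P := by
  obtain ⟨S, -, rfl⟩ := hP; exact convex_convexHull ℝ _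

lemma setDim_lt {P : Set (Eucl n)} (f : Eucl n →ₗ[ℝ] ℝ) (hf : f ≠ 0)
    (hP : ∀ x ∈ P, f x = 0) : setDim P < n := by
  obtain ⟨x0, hx0⟩ : ∃ x, f x ≠ 0 := by
    by_contra h; push_neg at h; exact hf (LinearMap.ext fun x => h x)
  have hsurj : Function.Surjective f := fun r =>
    ⟨(r / f x0) • x0, by simp [div_mul_cancel₀ _ hx0]⟩
  have hrange : LinearMap.range f = ⊤ := LinearMap.range_eq_top.mpr hsurj
  have h1 : Module.finrank ℝ (LinearMap.range f) = 1 := by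
    rw [hrange]; simp
  have h2 := LinearMap.finrank_range_add_finrank_ker f
  rw [finrank_euclideanSpace_fin, h1] at h2
  have hle : (affineSpan ℝ P).direction ≤ LinearMap.ker f := by
    have hsub : affineSpan ℝ P ≤ (LinearMap.ker f).toAffineSubspace :=
      affineSpan_le.mpr (fun x hx => Submodule.mem_toAffineSubspace.mpr (hP x hx))
    simpa [Submodule.toAffineSubspace_direction] using AffineSubspace.direction_le hsub
  have hmono := Submodule.finrank_mono hle
  unfold setDim
  omega

end Aux

section Maps
variable {n : ℕ}

/-- Diagonal linear map on Euclidean space. -/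
def dMap (n : ℕ) (c : Fin n → ℝ) : Eucl n →ₗ[ℝ] Eucl n :=
  Matrix.toEuclideanLin (Matrix.diagonal c)

lemma dMap_apply (c : Fin n → ℝ) (x : Eucl n) (i : Fin n) :
    dMap n c x i = c i * x i := by
  simp [dMap, Matrix.toEuclideanLin_apply, Matrix.mulVec_diagonal]

lemma dMap_adjoint (c : Fin n → ℝ) : LinearMap.adjoint (dMap n c) = dMap n c := by
  rw [dMap, ← Matrix.toEuclideanLin_conjTranspose_eq_adjoint]
  congr 1
  simp [Matrix.diagonal_conjTranspose]

lemma dMap_det (c : Fin n → ℝ) : LinearMap.det (dMap n c) = ∏ i, c i := by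
  have : dMap n c
      = Matrix.toLin (PiLp.basisFun 2 ℝ (Fin n)) (PiLp.basisFun 2 ℝ (Fin n))
        (Matrix.diagonal c) := rfl
  rw [this, LinearMap.det_toLin, Matrix.det_diagonal]

/-- Rank-one perturbation of the identity: `x ↦ x + ⟪d, x⟫ • z`. -/
def rkMap (n : ℕ) (z d : Eucl n) : Eucl n →ₗ[ℝ] Eucl n :=
  LinearMap.id + ((innerSL ℝ d).toLinearMap).smulRight z

lemma rkMap_apply (z d x : Eucl n) : rkMap n z d x = x + ⟪d, x⟫ • z := rfl

lemma rkMap_adjoint (z d : Eucl n) :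
    LinearMap.adjoint (rkMap n z d) = rkMap n d z := by
  symm
  rw [LinearMap.eq_adjoint_iff]
  intro x y
  rw [rkMap_apply, rkMap_apply, inner_add_left, inner_add_right,
    real_inner_smul_left, real_inner_smul_right]
  rw [real_inner_comm z x]
  ring

lemma rkMap_det_ne (z d : Eucl n) (h : 1 + ⟪d, z⟫ ≠ 0) :
    LinearMap.det (rkMap n z d) ≠ 0 := by
  set c : ℝ := (1 + ⟪d, z⟫)⁻¹ with hcdef
  have hc : c * (1 + ⟪d, z⟫) = 1 := inv_mul_cancel₀ h
  have hcomp : ∀ x : Eucl n, rkMap n z d (rkMap n (-(c • z)) d x) = x := by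
    intro x
    rw [rkMap_apply, rkMap_apply, inner_add_right, real_inner_smul_right,
      inner_neg_right, real_inner_smul_right]
    set A := ⟪d, x⟫ with hA
    set D := ⟪d, z⟫ with hD
    match_scalars
    · ring
    · linear_combination (-A) * hc
  have hcomp' : ∀ x : Eucl n, rkMap n (-(c • z)) d (rkMap n z d x) = x := by
    intro x
    rw [rkMap_apply, rkMap_apply, inner_add_right, real_inner_smul_right]
    set A := ⟪d, x⟫ with hA
    set D := ⟪d, z⟫ with hD
    match_scalars
    · ring
    · linear_combination (-A) * hc
  have hu : IsUnit (LinearMap.det (rkMap n z d)) := by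
    have := (LinearEquiv.ofLinear (rkMap n z d) (rkMap n (-(c • z)) d)
      (LinearMap.ext hcomp) (LinearMap.ext hcomp')).isUnit_det'
    simpa using this
  exact hu.ne_zero

end Maps

section Cut
variable {n : ℕ}

/-- Cutting a polytope by a halfspace `{x | 0 ≤ f x}` yields a polytope. -/
lemma cut_halfspace (f : Eucl n →ₗ[ℝ] ℝ) (S : Finset (Eucl n)) :
    ∃ T : Finset (Eucl n),
      convexHull ℝ (S : Set (Eucl n)) ∩ {x | 0 ≤ f x} = convexHull ℝ (T : Set (Eucl n)) := by
  classical
  set A := S.filter (fun a => 0 ≤ f a) with hA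
  set B := S.filter (fun a => ¬ 0 ≤ f a) with hB
  have hfA : ∀ a ∈ A, 0 ≤ f a := fun a ha => (Finset.mem_filter.mp ha).2
  have hfB : ∀ b ∈ B, f b < 0 := fun b hb => not_le.mp (Finset.mem_filter.mp hb).2
  have hAS : A ⊆ S := Finset.filter_subset _ _
  have hBS : B ⊆ S := Finset.filter_subset _ _
  have hr : ∀ a ∈ A, ∀ b ∈ B, 0 < f a - f b := fun a ha b hb =>
    sub_pos.mpr (lt_of_lt_of_le (hfB b hb) (hfA a ha))
  set q : Eucl n → Eucl n → Eucl n :=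
    fun a b => ((f a - f b)⁻¹ * f a) • b + ((f a - f b)⁻¹ * (-f b)) • a with hq
  have hq_mem : ∀ a ∈ A, ∀ b ∈ B,
      q a b ∈ convexHull ℝ (S : Set (Eucl n)) ∧ f (q a b) = 0 := by
    intro a ha b hb
    have hrab := hr a ha b hb
    constructor
    · refine (convex_convexHull ℝ _) (subset_convexHull ℝ _ (hBS hb))
        (subset_convexHull ℝ _ (hAS ha)) ?_ ?_ ?_
      · exact mul_nonneg (inv_nonneg.mpr hrab.le) (hfA a ha)
      · exact mul_nonneg (inv_nonneg.mpr hrab.le) (neg_nonneg.mpr (hfB b hb).le)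
      · field_simp
        ring
    · simp only [hq, map_add, _root_.map_smul, smul_eq_mul]
      field_simp
      ring
  refine ⟨A ∪ (A ×ˢ B).image (fun ab => q ab.1 ab.2), ?_⟩
  apply Set.Subset.antisymm
  · -- hard direction
    rintro x ⟨hxS, hxf⟩
    rw [Finset.convexHull_eq] at hxS
    obtain ⟨w, hw0, hw1, hwx⟩ := hxS
    rw [Finset.centerMass_eq_of_sum_1 _ _ hw1] at hwx
    simp only [id] at hwx
    have hxf : (0:ℝ) ≤ f x := hxf
    set α := ∑ a ∈ A, w a * f a with hα
    set β := -∑ b ∈ B, w b * f b with hβdef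
    set L := ∑ a ∈ A, w a with hL
    set M := ∑ b ∈ B, w b with hM
    have hLM : L + M = 1 := by
      rw [hL, hM, hA, hB, Finset.sum_filter_add_sum_filter_not]; exact hw1
    have hx_split : (∑ a ∈ A, w a • a) + (∑ b ∈ B, w b • b) = x := by
      rw [hA, hB, Finset.sum_filter_add_sum_filter_not]; exact hwx
    have hfx : α - β = f x := by
      have : f x = ∑ y ∈ S, w y * f y := by
        rw [← hwx, map_sum]; simp [_root_.map_smul]
      rw [this, hα, hβdef, ← Finset.sum_filter_add_sum_filter_not S (fun a => 0 ≤ f a)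
        (fun y => w y * f y)]
      ring
    have hα0 : 0 ≤ α := Finset.sum_nonneg fun a ha =>
      mul_nonneg (hw0 a (hAS ha)) (hfA a ha)
    have hβ0 : 0 ≤ β := by
      rw [hβdef, neg_nonneg]
      exact Finset.sum_nonpos fun b hb =>
        mul_nonpos_of_nonneg_of_nonpos (hw0 b (hBS hb)) (hfB b hb).le
    have hβα : β ≤ α := by linarith
    by_cases hβ : β = 0
    · -- B gets zero weight
      have hwB : ∀ b ∈ B, w b = 0 := by
        intro b hb
        have hz : ∑ b ∈ B, -(w b * f b) = 0 := by
          rw [Finset.sum_neg_distrib]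
          rw [hβdef] at hβ
          linarith [hβ]
        have := (Finset.sum_eq_zero_iff_of_nonneg (fun b hb =>
          neg_nonneg.mpr (mul_nonpos_of_nonneg_of_nonpos (hw0 b (hBS hb)) (hfB b hb).le))).mp
          hz b hb
        have hfb := (hfB b hb).ne
        have : w b * f b = 0 := by linarith
        rcases mul_eq_zero.mp this with h | h
        · exact h
        · exact absurd h hfb
      have hxA : ∑ a ∈ A, w a • a = x := by
        have hz2 : ∑ b ∈ B, w b • b = 0 :=
          Finset.sum_eq_zero (fun b hb => by rw [hwB b hb, zero_smul])
        rw [← hx_split, hz2, add_zero]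
      have hLone : L = 1 := by
        have : M = 0 := Finset.sum_eq_zero hwB
        linarith
      have := Finset.centerMass_mem_convexHull (t := A) (w := w)
        (fun a ha => hw0 a (hAS ha)) (by rw [← hL, hLone]; norm_num)
        (z := id) (s := ((A ∪ (A ×ˢ B).image (fun ab => q ab.1 ab.2) : Finset (Eucl n)) : Set (Eucl n)))
        (fun a ha => Finset.mem_coe.mpr (Finset.mem_union_left _ ha))
      rw [Finset.centerMass_eq_of_sum_1 _ _ (hL ▸ hLone)] at this
      simpa [hxA] using this
    · have hβpos : 0 < β := lt_of_le_of_ne hβ0 (Ne.symm hβ)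
      have hαpos : 0 < α := lt_of_lt_of_le hβpos hβα
      set W : Eucl n ⊕ (Eucl n × Eucl n) → ℝ :=
        Sum.elim (fun a => w a * (1 - β / α))
          (fun ab => w ab.1 * w ab.2 * (f ab.1 - f ab.2) / α) with hW
      set z : Eucl n ⊕ (Eucl n × Eucl n) → Eucl n :=
        Sum.elim id (fun ab => q ab.1 ab.2) with hz
      set t := A.disjSum (A ×ˢ B) with ht
      have hW0 : ∀ i ∈ t, 0 ≤ W i := by
        rintro (a | ⟨a, b⟩) hi
        · have ha := Finset.inl_mem_disjSum.mp hi
          have : β / α ≤ 1 := (div_le_one hαpos).mpr hβα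
          exact mul_nonneg (hw0 a (hAS ha)) (by linarith)
        · have hab := Finset.inr_mem_disjSum.mp hi
          obtain ⟨ha, hb⟩ := Finset.mem_product.mp hab
          exact div_nonneg (mul_nonneg (mul_nonneg (hw0 a (hAS ha)) (hw0 b (hBS hb)))
            (hr a ha b hb).le) hαpos.le
      have hkey : ∑ a ∈ A, ∑ b ∈ B, w a * w b * (f a - f b) = α * M + L * β := by
        have h1 : α * M = ∑ a ∈ A, ∑ b ∈ B, (w a * f a) * w b :=
          Finset.sum_mul_sum A B (fun a => w a * f a) w
        have h2 : L * β = ∑ a ∈ A, ∑ b ∈ B, w a * (-(w b * f b)) := by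
          rw [hβdef, hL, ← Finset.sum_neg_distrib]
          exact Finset.sum_mul_sum A B w (fun b => -(w b * f b))
        rw [h1, h2, ← Finset.sum_add_distrib]
        refine Finset.sum_congr rfl fun a _ => ?_
        rw [← Finset.sum_add_distrib]
        refine Finset.sum_congr rfl fun b _ => by ring
      have hWsum : ∑ i ∈ t, W i = 1 := by
        rw [ht, Finset.sum_disjSum]
        simp only [hW, Sum.elim_inl, Sum.elim_inr]
        rw [Finset.sum_product' (f := fun a b => w a * w b * (f a - f b) / α)]
        have hsum2 : ∑ a ∈ A, ∑ b ∈ B, w a * w b * (f a - f b) / α = (α * M + L * β) / α := by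
          rw [← hkey, Finset.sum_div]
          exact Finset.sum_congr rfl fun a _ => (Finset.sum_div _ _ _).symm
        rw [hsum2]
        have hsum1 : ∑ a ∈ A, w a * (1 - β / α) = L * (1 - β / α) := by
          rw [hL, Finset.sum_mul]
        rw [hsum1]
        field_simp
        linear_combination α * hLM
      have hcm : t.centerMass W z = x := by
        rw [Finset.centerMass_eq_of_sum_1 _ _ hWsum, ht, Finset.sum_disjSum]
        simp only [hW, hz, Sum.elim_inl, Sum.elim_inr, id]
        rw [Finset.sum_product' (f := fun a b => (w a * w b * (f a - f b) / α) • q a b)]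
        have hterm : ∀ a ∈ A, ∀ b ∈ B,
            (w a * w b * (f a - f b) / α) • q a b
              = ((α⁻¹ * (w a * f a)) * w b) • b + (α⁻¹ * w a * (-(w b * f b))) • a := by
          intro a ha b hb
          have hrab := (hr a ha b hb).ne'
          rw [hq, smul_add, smul_smul, smul_smul]
          congr 1
          · congr 1; field_simp
          · congr 1; field_simp
        have hinner : ∀ a ∈ A, ∑ b ∈ B, (w a * w b * (f a - f b) / α) • q a b
            = (α⁻¹ * (w a * f a)) • (∑ b ∈ B, w b • b) + (α⁻¹ * w a * β) • a := by
          intro a ha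
          rw [Finset.sum_congr rfl (fun b hb => hterm a ha b hb), Finset.sum_add_distrib]
          congr 1
          · rw [Finset.smul_sum]
            refine Finset.sum_congr rfl fun b _ => ?_
            rw [smul_smul]
          · rw [← Finset.sum_smul]
            congr 1
            rw [hβdef, ← Finset.sum_neg_distrib, Finset.mul_sum]
        rw [Finset.sum_congr rfl hinner, Finset.sum_add_distrib]
        have e1 : ∑ a ∈ A, (α⁻¹ * (w a * f a)) • (∑ b ∈ B, w b • b)
            = ∑ b ∈ B, w b • b := by
          rw [← Finset.sum_smul, ← Finset.mul_sum, ← hα, inv_mul_cancel₀ hαpos.ne', one_smul]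
        have e2 : ∑ a ∈ A, (α⁻¹ * w a * β) • a = (α⁻¹ * β) • ∑ a ∈ A, w a • a := by
          rw [Finset.smul_sum]
          refine Finset.sum_congr rfl fun a _ => ?_
          rw [smul_smul]
          ring_nf
        have e3 : ∑ a ∈ A, (w a * (1 - β / α)) • a
            = (1 - β / α) • ∑ a ∈ A, w a • a := by
          rw [Finset.smul_sum]
          refine Finset.sum_congr rfl fun a _ => ?_
          rw [smul_smul]
          ring_nf
        rw [e1, e2, e3, ← hx_split]
        match_scalars
        · field_simp; ring
        · ring
      rw [← hcm]
      refine Finset.centerMass_mem_convexHull t hW0 (by rw [hWsum]; norm_num) ?_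
      rintro (a | ⟨a, b⟩) hi
      · exact Finset.mem_coe.mpr (Finset.mem_union_left _ (Finset.inl_mem_disjSum.mp hi))
      · refine Finset.mem_coe.mpr (Finset.mem_union_right _ ?_)
        exact Finset.mem_image.mpr ⟨(a, b), Finset.inr_mem_disjSum.mp hi, rfl⟩
  · -- easy direction
    apply convexHull_min
    · intro x hx
      rcases Finset.mem_union.mp (Finset.mem_coe.mp hx) with h | h
      · exact ⟨subset_convexHull ℝ _ (hAS h), hfA _ h⟩
      · obtain ⟨⟨a, b⟩, hab, rfl⟩ := Finset.mem_image.mp h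
        obtain ⟨ha, hb⟩ := Finset.mem_product.mp hab
        obtain ⟨hmem, hzero⟩ := hq_mem a ha b hb
        exact ⟨hmem, by simp [hzero]⟩
    · exact (convex_convexHull ℝ _).inter (convex_halfSpace_ge f.isLinear 0)

end Cut

/-- The coordinate functional `x ↦ ⟪v, x⟫` as a linear map. -/
def cfn (n : ℕ) (v : Eucl n) : Eucl n →ₗ[ℝ] ℝ where
  toFun x := ⟪v, x⟫
  map_add' x y := inner_add_right v x y
  map_smul' c x := real_inner_smul_right v x c

lemma cfn_apply {n : ℕ} (v x : Eucl n) : cfn n v x = ⟪v, x⟫ := rfl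

lemma cfn_ne_zero {n : ℕ} (v : Eucl n) (hv : v ≠ 0) : cfn n v ≠ 0 := by
  intro h
  have h2 := LinearMap.congr_fun h v
  rw [cfn_apply, LinearMap.zero_apply] at h2
  exact hv (inner_self_eq_zero.mp h2)

lemma key1 {n : ℕ} (hn : 2 ≤ n) (p : ℝ) (hp : 1 < p)
    (Φ : Set (Eucl n) → Eucl n → ℝ)
    (hCp : ∀ P : Set (Eucl n), IsPolytopeO P → Continuous (Φ P) ∧
      ∀ s : ℝ, 0 < s → ∀ u : Eucl n, Φ P (s • u) = s ^ p * Φ P u)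
    (hsimple : ∀ P : Set (Eucl n), IsPolytopeO P → setDim P < n → Φ P = 0)
    (hcov : ∀ P : Set (Eucl n), IsPolytopeO P →
      ∀ φ : Eucl n →ₗ[ℝ] Eucl n, LinearMap.det φ ≠ 0 →
        Φ (φ '' P) = Φ P ∘ LinearMap.adjoint φ)
    (hcont : ∀ ε > (0:ℝ), ∃ δ > (0:ℝ), ∀ P : Set (Eucl n), IsPolytopeO P →
      hausdorffDist P
        (segment ℝ (0 : Eucl n) (EuclideanSpace.single (⟨0, Nat.lt_of_lt_of_le Nat.two_pos hn⟩ : Fin n) (1:ℝ))) < δ →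
      sphSup (fun u => Φ P u -
        Φ (segment ℝ (0 : Eucl n) (EuclideanSpace.single (⟨0, Nat.lt_of_lt_of_le Nat.two_pos hn⟩ : Fin n) (1:ℝ))) u)
        < ε)
    (Q : Set (Eucl n)) (hQ : IsPolytopeO Q)
    (hhalf : ∀ x ∈ Q, 0 ≤ ⟪x, EuclideanSpace.single (⟨0, Nat.lt_of_lt_of_le Nat.two_pos hn⟩ : Fin n) (1:ℝ)⟫)
    (u0 : Eucl n)
    (hu0 : u0 = EuclideanSpace.single (⟨0, Nat.lt_of_lt_of_le Nat.two_pos hn⟩ : Fin n) (1:ℝ) ∨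
      u0 = -EuclideanSpace.single (⟨0, Nat.lt_of_lt_of_le Nat.two_pos hn⟩ : Fin n) (1:ℝ)) :
    Φ Q u0 = 0 := by
  have hn0 : (0 : ℕ) < n := by omega
  set i0 : Fin n := ⟨0, hn0⟩ with hi0def
  set ee : Eucl n := EuclideanSpace.single i0 (1:ℝ) with heedef
  have hip : ∀ v : Eucl n, ⟪v, ee⟫ = v i0 := by
    intro v
    rw [heedef, EuclideanSpace.inner_single_right]
    simp
  have heenorm : ‖ee‖ = 1 := by rw [heedef]; simp
  -- compactness, convexity, boundedness, max of coordinate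
  have hcomp : IsCompact Q := isCompact_of_isPolytope hQ.1
  have hconv : Convex ℝ Q := convex_of_isPolytope hQ.1
  obtain ⟨R, hR0, hR⟩ : ∃ R : ℝ, 0 ≤ R ∧ ∀ x ∈ Q, ‖x‖ ≤ R := by
    obtain ⟨r, hr⟩ := hcomp.isBounded.subset_closedBall 0
    exact ⟨max r 0, le_max_right _ _, fun x hx => by
      have := hr hx
      rw [mem_closedBall, dist_zero_right] at this
      exact this.trans (le_max_left _ _)⟩
  obtain ⟨xb, hxbQ, hxbmax⟩ : ∃ xb ∈ Q, ∀ x ∈ Q, ⟪x, ee⟫ ≤ ⟪xb, ee⟫ := by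
    have hfc : Continuous (fun x : Eucl n => (⟪x, ee⟫ : ℝ)) :=
      Continuous.inner continuous_id continuous_const
    obtain ⟨xb, hxb, hmax⟩ := hcomp.exists_isMaxOn ⟨0, hQ.2⟩ hfc.continuousOn
    exact ⟨xb, hxb, fun x hx => hmax hx⟩
  set b : ℝ := ⟪xb, ee⟫ with hbdef
  have hb0 : 0 ≤ b := hhalf xb hxbQ
  rcases eq_or_lt_of_le hb0 with hb | hb
  · -- degenerate: Q lies in the hyperplane
    have hflat : ∀ x ∈ Q, cfn n ee x = 0 := by
      intro x hx
      have h1 : ⟪x, ee⟫ ≤ 0 := hb ▸ hxbmax x hx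
      have h2 := hhalf x hx
      have h3 : ⟪x, ee⟫ = 0 := le_antisymm h1 h2
      rw [cfn_apply, real_inner_comm]
      exact h3
    have hfne : cfn n ee ≠ 0 := cfn_ne_zero ee (by
      intro h
      rw [h] at heenorm
      simp at heenorm)
    have := hsimple Q hQ (setDim_lt _ hfne hflat)
    rw [this]
    simp
  · -- main case
    have hu0norm : ‖u0‖ = 1 := by rcases hu0 with rfl | rfl <;> simp [heenorm]
    have habs : ∀ ε > (0:ℝ), |Φ Q u0| < ε := by
      intro ε' hε'
      have hbp : (0:ℝ) < b ^ p := Real.rpow_pos_of_pos hb p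
      set ε : ℝ := ε' / b ^ p with hεdef
      have hε : 0 < ε := div_pos hε' hbp
      obtain ⟨δ, hδ0, hδ⟩ := hcont ε hε
      set s : ℝ := δ / (4 * R + 4) with hsdef
      have hs0 : 0 < s := by positivity
      set c : Fin n → ℝ := fun i => if i = i0 then b⁻¹ else s with hcdef
      set ψ := dMap n c with hψdef
      have hdet : LinearMap.det ψ ≠ 0 := by
        rw [hψdef, dMap_det]
        apply Finset.prod_ne_zero_iff.mpr
        intro i _
        rw [hcdef]
        by_cases h : i = i0 <;> simp [h, hb.ne', hs0.ne']
      have hpoly : IsPolytopeO (ψ '' Q) := isPolytopeO_image hQ ψ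
      -- the key vector identity
      have hψeq : ∀ x : Eucl n, ψ x - (⟪x, ee⟫ / b) • ee = s • (x - ⟪x, ee⟫ • ee) := by
        intro x
        ext i
        have h1 : ψ x i = c i * x i := dMap_apply c x i
        by_cases h : i = i0
        · subst h
          rw [hip x]
          simp only [PiLp.sub_apply, PiLp.smul_apply, h1, hcdef, if_pos rfl, heedef,
            EuclideanSpace.single_apply, if_pos rfl, smul_eq_mul, hip x]
          field_simp; simp
        · simp only [PiLp.sub_apply, PiLp.smul_apply, h1, hcdef, if_neg h, heedef,
            EuclideanSpace.single_apply, if_neg h, smul_eq_mul]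
          ring
      have hdistb : ∀ x ∈ Q, ‖ψ x - (⟪x, ee⟫ / b) • ee‖ ≤ 2 * s * R := by
        intro x hx
        rw [hψeq x, norm_smul, Real.norm_eq_abs, abs_of_pos hs0]
        have h1 : ‖x - ⟪x, ee⟫ • ee‖ ≤ ‖x‖ + |⟪x, ee⟫| * ‖ee‖ := by
          refine (norm_sub_le _ _).trans ?_
          rw [norm_smul, Real.norm_eq_abs]
        have h2 : |⟪x, ee⟫| ≤ ‖x‖ * ‖ee‖ := abs_real_inner_le_norm x ee
        have hxR := hR x hx
        rw [heenorm] at h1 h2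
        have : ‖x - ⟪x, ee⟫ • ee‖ ≤ 2 * R := by
          rw [mul_one] at h1 h2
          linarith
        calc s * ‖x - ⟪x, ee⟫ • ee‖ ≤ s * (2 * R) := by
              exact mul_le_mul_of_nonneg_left this hs0.le
          _ = 2 * s * R := by ring
      have hseg : ∀ x ∈ Q, (⟪x, ee⟫ / b) • ee ∈ segment ℝ (0 : Eucl n) ee := by
        intro x hx
        rw [segment_eq_image ℝ (0:Eucl n) ee]
        refine ⟨⟪x, ee⟫ / b, ⟨div_nonneg (hhalf x hx) hb0, ?_⟩, by simp⟩
        rw [div_le_one hb]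
        exact hxbmax x hx
      have hdist : hausdorffDist (ψ '' Q) (segment ℝ (0 : Eucl n) ee) < δ := by
        have hle : hausdorffDist (ψ '' Q) (segment ℝ (0 : Eucl n) ee) ≤ 2 * s * R := by
          apply hausdorffDist_le_of_mem_dist (by positivity)
          · rintro y ⟨x, hx, rfl⟩
            exact ⟨(⟪x, ee⟫ / b) • ee, hseg x hx, by
              rw [dist_eq_norm]; exact hdistb x hx⟩
          · intro y hy
            rw [segment_eq_image ℝ (0:Eucl n) ee] at hy
            obtain ⟨t, ht, rfl⟩ := hy
            refine ⟨ψ (t • xb), ⟨t • xb, ?_, rfl⟩, ?_⟩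
            · have := hconv hQ.2 hxbQ (a := 1 - t) (b := t) (by linarith [ht.2]) ht.1
                (by ring)
              simpa using this
            · show dist ((1 - t) • (0 : Eucl n) + t • ee) (ψ (t • xb)) ≤ 2 * s * R
              have hmem : t • xb ∈ Q := by
                have := hconv hQ.2 hxbQ (a := 1 - t) (b := t) (by linarith [ht.2]) ht.1
                  (by ring)
                simpa using this
              have hy : (1 - t) • (0 : Eucl n) + t • ee = t • ee := by simp
              have hteq : (⟪t • xb, ee⟫ / b) • ee = t • ee := by
                have h1 : (⟪t • xb, ee⟫ : ℝ) = t * b := by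
                  rw [real_inner_smul_left, hbdef]
                rw [h1, mul_div_assoc, div_self hb.ne', mul_one]
              rw [hy, dist_comm, dist_eq_norm, ← hteq]
              exact hdistb (t • xb) hmem
        have : 2 * s * R < δ := by
          have hsle : s * (4 * R + 4) = δ := by
            rw [hsdef]; exact div_mul_cancel₀ δ (by positivity)
          nlinarith [hs0, hR0]
        linarith
      have hsph := hδ (ψ '' Q) hpoly hdist
      -- extract the value at u0
      have hcontg : Continuous (Φ (ψ '' Q)) := (hCp _ hpoly).1
      have hseg0 : Φ (segment ℝ (0 : Eucl n)
          (EuclideanSpace.single (⟨0, Nat.lt_of_lt_of_le Nat.two_pos hn⟩ : Fin n) (1:ℝ))) = 0 := by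
        classical
        apply hsimple
        · constructor
          · refine ⟨({0, ee} : Finset (Eucl n)), ⟨0, by simp⟩, ?_⟩
            rw [Finset.coe_insert, Finset.coe_singleton, convexHull_pair]
          · exact left_mem_segment ℝ _ _
        · set i1 : Fin n := ⟨1, by omega⟩ with hi1def
          set e2 : Eucl n := EuclideanSpace.single i1 (1:ℝ) with he2def
          apply setDim_lt (f := cfn n e2)
          · exact cfn_ne_zero e2 (by
              intro h
              have : ‖e2‖ = 1 := by rw [he2def]; simp
              rw [h] at this
              simp at this)
          · intro x hx
            rw [segment_eq_image ℝ (0:Eucl n) _] at hx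
            obtain ⟨t, _, rfl⟩ := hx
            have hi10 : i1 ≠ i0 := by
              rw [hi0def, hi1def]
              simp [Fin.ext_iff]
            show ⟪e2, (1 - t) • (0:Eucl n) + t • ee⟫ = 0
            rw [smul_zero, zero_add, real_inner_smul_right, he2def, heedef,
              EuclideanSpace.inner_single_left, EuclideanSpace.single_apply]
            simp [hi10]
      have hbdd : BddAbove (Set.range fun u : Metric.sphere (0:Eucl n) 1 =>
          |Φ (ψ '' Q) u.1 - Φ (segment ℝ (0 : Eucl n)
            (EuclideanSpace.single (⟨0, Nat.lt_of_lt_of_le Nat.two_pos hn⟩ : Fin n) (1:ℝ))) u.1|) := by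
        rw [hseg0]
        simp only [Pi.zero_apply, sub_zero]
        have hc := (isCompact_sphere (0:Eucl n) 1).image
          (continuous_abs.comp hcontg)
        have heq : (Set.range fun u : Metric.sphere (0:Eucl n) 1 => |Φ (ψ '' Q) u.1|)
            = (fun x => |Φ (ψ '' Q) x|) '' Metric.sphere (0:Eucl n) 1 :=
          (Set.image_eq_range (fun x => |Φ (ψ '' Q) x|) (Metric.sphere (0:Eucl n) 1)).symm
        rw [heq]
        exact hc.bddAbove
      have hval : |Φ (ψ '' Q) u0 - Φ (segment ℝ (0 : Eucl n)
          (EuclideanSpace.single (⟨0, Nat.lt_of_lt_of_le Nat.two_pos hn⟩ : Fin n) (1:ℝ))) u0| < ε := by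
        have := le_ciSup hbdd (⟨u0, by simp [hu0norm]⟩ : Metric.sphere (0:Eucl n) 1)
        exact lt_of_le_of_lt this hsph
      rw [hseg0] at hval
      simp only [Pi.zero_apply, sub_zero] at hval
      -- now rewrite Φ (ψ '' Q) u0 in terms of Φ Q u0
      have hadj := hcov Q hQ ψ hdet
      rw [hψdef, dMap_adjoint] at hadj
      have happ := congrFun hadj u0
      have hψu0 : dMap n c u0 = b⁻¹ • u0 := by
        have hψee : dMap n c ee = b⁻¹ • ee := by
          ext i
          rw [dMap_apply]
          by_cases h : i = i0
          · subst h; simp [hcdef, heedef, EuclideanSpace.single_apply]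
          · simp [hcdef, h, heedef, EuclideanSpace.single_apply]
        rcases hu0 with rfl | rfl
        · exact hψee
        · rw [map_neg, hψee, smul_neg]
      rw [Function.comp_apply, hψu0] at happ
      have hhomog := (hCp Q hQ).2 b⁻¹ (inv_pos.mpr hb) u0
      rw [hhomog] at happ
      rw [← hψdef] at happ
      rw [happ] at hval
      rw [abs_mul, abs_of_pos (Real.rpow_pos_of_pos (inv_pos.mpr hb) p)] at hval
      rw [Real.inv_rpow hb.le] at hval
      calc |Φ Q u0| = (b ^ p) * ((b ^ p)⁻¹ * |Φ Q u0|) := by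
            rw [← mul_assoc, mul_inv_cancel₀ hbp.ne', one_mul]
        _ < (b ^ p) * ε := by
            apply mul_lt_mul_of_pos_left hval hbp
        _ = ε' := by
            rw [hεdef, mul_comm, div_mul_cancel₀ _ hbp.ne']
    -- conclude
    by_contra hne
    have hpos : 0 < |Φ Q u0| := abs_pos.mpr hne
    exact lt_irrefl _ (habs _ hpos)

-- helper: intersection of a polytope-with-origin with a halfspace is a polytope-with-origin
lemma isPolytopeO_inter_halfspace {n : ℕ} {Q : Set (Eucl n)} (hQ : IsPolytopeO Q)
    (f : Eucl n →ₗ[ℝ] ℝ) : IsPolytopeO (Q ∩ {x | 0 ≤ f x}) := by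
  obtain ⟨⟨S, hS, rfl⟩, h0⟩ := hQ
  obtain ⟨T, hT⟩ := cut_halfspace f S
  have h0' : (0 : Eucl n) ∈ convexHull ℝ (S : Set (Eucl n)) ∩ {x | 0 ≤ f x} :=
    ⟨h0, by simp⟩
  refine ⟨⟨T, ?_, hT⟩, h0'⟩
  rcases T.eq_empty_or_nonempty with rfl | h
  · rw [hT] at h0'
    simp at h0'
  · exact h

theorem key2 {n : ℕ} (hn : 2 ≤ n) (p : ℝ) (hp : 1 < p)
    (Φ : Set (Eucl n) → Eucl n → ℝ)
    (hCp : ∀ P : Set (Eucl n), IsPolytopeO P → Continuous (Φ P) ∧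
      ∀ s : ℝ, 0 < s → ∀ u : Eucl n, Φ P (s • u) = s ^ p * Φ P u)
    (hval : ∀ K L : Set (Eucl n), IsPolytopeO K → IsPolytopeO L → IsPolytopeO (K ∪ L) →
      Φ (K ∪ L) + Φ (K ∩ L) = Φ K + Φ L)
    (hsimple : ∀ P : Set (Eucl n), IsPolytopeO P → setDim P < n → Φ P = 0)
    (hcov : ∀ P : Set (Eucl n), IsPolytopeO P →
      ∀ φ : Eucl n →ₗ[ℝ] Eucl n, LinearMap.det φ ≠ 0 →
        Φ (φ '' P) = Φ P ∘ LinearMap.adjoint φ)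
    (hcont : ∀ ε > (0:ℝ), ∃ δ > (0:ℝ), ∀ P : Set (Eucl n), IsPolytopeO P →
      hausdorffDist P
        (segment ℝ (0 : Eucl n) (EuclideanSpace.single (⟨0, Nat.lt_of_lt_of_le Nat.two_pos hn⟩ : Fin n) (1:ℝ))) < δ →
      sphSup (fun u => Φ P u -
        Φ (segment ℝ (0 : Eucl n) (EuclideanSpace.single (⟨0, Nat.lt_of_lt_of_le Nat.two_pos hn⟩ : Fin n) (1:ℝ))) u)
        < ε)
    (Q : Set (Eucl n)) (hQ : IsPolytopeO Q) :
    Φ Q (EuclideanSpace.single (⟨0, Nat.lt_of_lt_of_le Nat.two_pos hn⟩ : Fin n) (1:ℝ)) = 0 := by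
  have hn0 : (0 : ℕ) < n := by omega
  set i0 : Fin n := ⟨0, hn0⟩ with hi0def
  set ee : Eucl n := EuclideanSpace.single i0 (1:ℝ) with heedef
  have hip : ∀ v : Eucl n, ⟪v, ee⟫ = v i0 := by
    intro v
    rw [heedef, EuclideanSpace.inner_single_right]
    simp
  have heenorm : ‖ee‖ = 1 := by rw [heedef]; simp
  set Qp : Set (Eucl n) := Q ∩ {x | 0 ≤ cfn n ee x} with hQpdef
  set Qm : Set (Eucl n) := Q ∩ {x | 0 ≤ (-(cfn n ee)) x} with hQmdef
  have hQp : IsPolytopeO Qp := isPolytopeO_inter_halfspace hQ _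
  have hQm : IsPolytopeO Qm := isPolytopeO_inter_halfspace hQ _
  have hQ0 : IsPolytopeO (Qp ∩ {x | 0 ≤ (-(cfn n ee)) x}) :=
    isPolytopeO_inter_halfspace hQp _
  have hinter : Qp ∩ Qm = Qp ∩ {x | 0 ≤ (-(cfn n ee)) x} := by
    rw [hQpdef, hQmdef]
    ext x
    constructor
    · rintro ⟨⟨h1, h2⟩, ⟨h3, h4⟩⟩
      exact ⟨⟨h1, h2⟩, h4⟩
    · rintro ⟨⟨h1, h2⟩, h4⟩
      exact ⟨⟨h1, h2⟩, ⟨h1, h4⟩⟩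
  have hunion : Qp ∪ Qm = Q := by
    rw [hQpdef, hQmdef]
    ext x
    constructor
    · rintro (⟨h1, _⟩ | ⟨h1, _⟩) <;> exact h1
    · intro hx
      rcases le_total 0 (cfn n ee x) with h | h
      · exact Or.inl ⟨hx, h⟩
      · exact Or.inr ⟨hx, by simpa using h⟩
  have hdim0 : setDim (Qp ∩ {x | 0 ≤ (-(cfn n ee)) x}) < n := by
    apply setDim_lt (f := cfn n ee)
    · exact cfn_ne_zero ee (by intro h; rw [h] at heenorm; simp at heenorm)
    · rintro x ⟨⟨_, h2⟩, h4⟩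
      simp only [LinearMap.neg_apply, Set.mem_setOf_eq, neg_nonneg] at h4
      exact le_antisymm h4 h2
  have hv := hval Qp Qm hQp hQm (by rw [hunion]; exact hQ)
  rw [hunion, hinter, hsimple _ hQ0 hdim0] at hv
  have hv' := congrFun hv ee
  simp only [Pi.add_apply, Pi.zero_apply, add_zero] at hv'
  -- Φ Qp ee = 0 by key1
  have hQpee : Φ Qp ee = 0 := by
    apply key1 hn p hp Φ hCp hsimple hcov hcont Qp hQp
    · intro x hx
      have := hx.2
      simp only [Set.mem_setOf_eq, cfn_apply] at this
      rw [real_inner_comm] at this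
      exact this
    · exact Or.inl rfl
  -- Φ Qm ee = 0 via reflection
  have hQmee : Φ Qm ee = 0 := by
    set r : Eucl n →ₗ[ℝ] Eucl n := dMap n (fun i => if i = i0 then (-1:ℝ) else 1) with hrdef
    have hrdet : LinearMap.det r ≠ 0 := by
      rw [hrdef, dMap_det]
      apply Finset.prod_ne_zero_iff.mpr
      intro i _
      by_cases h : i = i0 <;> simp [h]
    have hrQm : IsPolytopeO (r '' Qm) := isPolytopeO_image hQm r
    have hrhalf : ∀ x ∈ r '' Qm, 0 ≤ ⟪x, ee⟫ := by
      rintro x ⟨y, hy, rfl⟩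
      rw [hip]
      have : r y i0 = -(y i0) := by
        rw [hrdef, dMap_apply]
        simp
      rw [this]
      have := hy.2
      simp only [Set.mem_setOf_eq, LinearMap.neg_apply, cfn_apply, neg_nonneg] at this
      rw [real_inner_comm, hip] at this
      linarith
    have h1 : Φ (r '' Qm) (-ee) = 0 :=
      key1 hn p hp Φ hCp hsimple hcov hcont (r '' Qm) hrQm hrhalf (-ee) (Or.inr rfl)
    have hadj := hcov Qm hQm r hrdet
    rw [hrdef, dMap_adjoint, ← hrdef] at hadj
    have happ := congrFun hadj (-ee)
    rw [Function.comp_apply] at happ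
    have hrnee : r (-ee) = ee := by
      ext i
      rw [map_neg, hrdef]
      simp only [PiLp.neg_apply, dMap_apply]
      by_cases h : i = i0
      · subst h; simp [heedef, EuclideanSpace.single_apply]
      · simp [h, heedef, EuclideanSpace.single_apply]
    rw [hrnee] at happ
    rw [← happ, h1]
  rw [hQpee, hQmee] at hv'
  simpa using hv'

/-- For `n ≥ 2`, every simple `GL(n)`-covariant valuation
`Φ : 𝒫ⁿ_o → C_p(ℝⁿ)` that is continuous at the line segment `[o, e₁]` vanishes. -/
theorem statement_11 (n : ℕ) (hn : 2 ≤ n) (p : ℝ) (hp : 1 < p)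
    (Φ : Set (Eucl n) → Eucl n → ℝ) (hempty : Φ ∅ = 0)
    (hCp : ∀ P : Set (Eucl n), IsPolytopeO P → Continuous (Φ P) ∧
      ∀ s : ℝ, 0 < s → ∀ u : Eucl n, Φ P (s • u) = s ^ p * Φ P u)
    (hval : ∀ K L : Set (Eucl n), IsPolytopeO K → IsPolytopeO L → IsPolytopeO (K ∪ L) →
      Φ (K ∪ L) + Φ (K ∩ L) = Φ K + Φ L)
    (hsimple : ∀ P : Set (Eucl n), IsPolytopeO P → setDim P < n → Φ P = 0)
    (hcov : ∀ P : Set (Eucl n), IsPolytopeO P →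
      ∀ φ : Eucl n →ₗ[ℝ] Eucl n, LinearMap.det φ ≠ 0 →
        Φ (φ '' P) = Φ P ∘ LinearMap.adjoint φ)
    (hcont : ∀ ε > (0:ℝ), ∃ δ > (0:ℝ), ∀ P : Set (Eucl n), IsPolytopeO P →
      hausdorffDist P
        (segment ℝ (0 : Eucl n) (EuclideanSpace.single (⟨0, by omega⟩ : Fin n) (1:ℝ))) < δ →
      sphSup (fun u => Φ P u -
        Φ (segment ℝ (0 : Eucl n) (EuclideanSpace.single (⟨0, by omega⟩ : Fin n) (1:ℝ))) u)
        < ε) :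
    ∀ P : Set (Eucl n), IsPolytopeO P → Φ P = 0 := by
  have hn0 : (0 : ℕ) < n := by omega
  set i0 : Fin n := ⟨0, hn0⟩ with hi0def
  set ee : Eucl n := EuclideanSpace.single i0 (1:ℝ) with heedef
  have heenorm : ‖ee‖ = 1 := by rw [heedef]; simp
  have hipee : ⟪ee, ee⟫ = 1 := by
    rw [real_inner_self_eq_norm_sq, heenorm]
    norm_num
  -- value at e₁ vanishes for every polytope
  have hkey2 : ∀ Q : Set (Eucl n), IsPolytopeO Q → Φ Q ee = 0 := by
    intro Q hQ
    exact key2 hn p hp Φ hCp hval hsimple hcov hcont Q hQ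
  -- transfer lemma
  have transfer : ∀ v w' : Eucl n, (∃ z : Eucl n, ⟪v, z⟫ = 1 ∧ ⟪w', z⟫ ≠ 0) →
      (∀ Q : Set (Eucl n), IsPolytopeO Q → Φ Q v = 0) →
      ∀ Q : Set (Eucl n), IsPolytopeO Q → Φ Q w' = 0 := by
    rintro v w' ⟨z, hvz, hwz⟩ hv Q hQ
    set d : Eucl n := w' - v with hddef
    have hdz : 1 + ⟪d, z⟫ = ⟪w', z⟫ := by
      rw [hddef, inner_sub_left, hvz]
      ring
    have hdet : LinearMap.det (rkMap n z d) ≠ 0 :=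
      rkMap_det_ne z d (by rw [hdz]; exact hwz)
    have h0 := hv ((rkMap n z d) '' Q) (isPolytopeO_image hQ _)
    have hc := hcov Q hQ (rkMap n z d) hdet
    have happ := congrFun hc v
    rw [Function.comp_apply, rkMap_adjoint, rkMap_apply] at happ
    have hzv : ⟪z, v⟫ = 1 := by rw [real_inner_comm]; exact hvz
    rw [hzv, one_smul, hddef] at happ
    rw [add_sub_cancel] at happ
    rw [← happ, h0]
  -- conclude
  intro P hP
  funext w
  show Φ P w = 0
  rcases eq_or_ne w 0 with rfl | hw
  · -- value at 0
    have h := (hCp P hP).2 2 two_pos 0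
    rw [smul_zero] at h
    have h2 : (1:ℝ) < 2 ^ p := by
      rw [show (1:ℝ) = (2:ℝ) ^ (0:ℝ) by simp]
      exact Real.rpow_lt_rpow_left_iff one_lt_two |>.mpr (by linarith)
    nlinarith [h, h2]
  · by_cases hwe : ⟪w, ee⟫ ≠ 0
    · exact transfer ee w ⟨ee, hipee, hwe⟩ hkey2 P hP
    · push_neg at hwe
      set u : Eucl n := ee + w with hudef
      have huee : ⟪u, ee⟫ = 1 := by
        rw [hudef, inner_add_left, hipee, hwe, add_zero]
      have h1 : ∀ Q : Set (Eucl n), IsPolytopeO Q → Φ Q u = 0 :=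
        transfer ee u ⟨ee, hipee, by rw [huee]; norm_num⟩ hkey2
      have hw2 : (0:ℝ) < ‖w‖ ^ 2 := by
        have : ‖w‖ ≠ 0 := norm_ne_zero_iff.mpr hw
        positivity
      have hew : ⟪ee, w⟫ = (0:ℝ) := by rw [real_inner_comm]; exact hwe
      have hz1 : ⟪u, (‖w‖ ^ 2)⁻¹ • w⟫ = 1 := by
        rw [real_inner_smul_right, hudef, inner_add_left, hew, zero_add,
          real_inner_self_eq_norm_sq, inv_mul_cancel₀ hw2.ne']
      have hz2 : ⟪w, (‖w‖ ^ 2)⁻¹ • w⟫ ≠ 0 := by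
        rw [real_inner_smul_right, real_inner_self_eq_norm_sq, inv_mul_cancel₀ hw2.ne']
        norm_num
      exact transfer u w ⟨(‖w‖ ^ 2)⁻¹ • w, hz1, hz2⟩ h1 P hP
end
end

section
/- Let n ≥ 2 and p > 1. If Φ : P^n_o → C_p(R^n) is SL(n)-covariant, then Φ(P)(x) = Φ(P)(π_P x) for all P ∈ P^n_o and all x ∈ R^n, where π_P denotes the orthogonal projection of R^n onto the linear hull of P. In particular, an SL(n)-covariant Φ maps a polytope contained in a linear subspace to a function determined by that subspace. -/
open MeasureTheory Metric
open scoped RealInnerProductSpace Pointwise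

noncomputable section

/-- shear map y ↦ y + ⟪w, y⟫ • v -/
def shear {n : ℕ} (w v : Eucl n) : Eucl n →ₗ[ℝ] Eucl n :=
  LinearMap.id + LinearMap.smulRight (innerₛₗ ℝ w) v

lemma shear_apply {n : ℕ} (w v y : Eucl n) : shear w v y = y + ⟪w, y⟫ • v := rfl

lemma shear_adjoint {n : ℕ} (w v : Eucl n) :
    LinearMap.adjoint (shear w v) = shear v w := by
  symm
  rw [LinearMap.eq_adjoint_iff]
  intro x y
  simp only [shear_apply, inner_add_left, inner_add_right, real_inner_smul_left,
    real_inner_smul_right]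
  rw [real_inner_comm x v]
  ring

lemma shear_det {n : ℕ} (hn : 2 ≤ n) (w v : Eucl n) (hw : w ≠ 0) (hv : v ≠ 0)
    (hwv : ⟪w, v⟫ = 0) : LinearMap.det (shear w v) = 1 := by
  have h0 : (0 : ℕ) < n := by omega
  have h1 : (1 : ℕ) < n := by omega
  set i0 : Fin n := ⟨0, h0⟩
  set i1 : Fin n := ⟨1, h1⟩
  have hne : i0 ≠ i1 := by simp [i0, i1, Fin.ext_iff]
  set f : Fin n → Eucl n := fun i => if i = i0 then ‖v‖⁻¹ • v else ‖w‖⁻¹ • w with hf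
  have hnv : ‖v‖ ≠ 0 := norm_ne_zero_iff.mpr hv
  have hnw : ‖w‖ ≠ 0 := norm_ne_zero_iff.mpr hw
  have hvv : ⟪v, v⟫ = ‖v‖ ^ 2 := real_inner_self_eq_norm_sq v
  have hww : ⟪w, w⟫ = ‖w‖ ^ 2 := real_inner_self_eq_norm_sq w
  have hvw : ⟪v, w⟫ = 0 := by rw [real_inner_comm]; exact hwv
  have hf0 : f i0 = ‖v‖⁻¹ • v := by simp [f]
  have hf1 : f i1 = ‖w‖⁻¹ • w := by simp [f, hne.symm]
  have e00 : ⟪f i0, f i0⟫ = 1 := by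
    rw [hf0, real_inner_smul_left, real_inner_smul_right, hvv]; field_simp
  have e11 : ⟪f i1, f i1⟫ = 1 := by
    rw [hf1, real_inner_smul_left, real_inner_smul_right, hww]; field_simp
  have e01 : ⟪f i0, f i1⟫ = 0 := by
    rw [hf0, hf1, real_inner_smul_left, real_inner_smul_right, hvw]; ring
  have e10 : ⟪f i1, f i0⟫ = 0 := by
    rw [hf1, hf0, real_inner_smul_left, real_inner_smul_right, hwv]; ring
  have horth : Orthonormal ℝ (({i0, i1} : Set (Fin n)).restrict f) := by
    rw [orthonormal_iff_ite]
    rintro ⟨i, hi⟩ ⟨j, hj⟩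
    simp only [Set.mem_insert_iff, Set.mem_singleton_iff] at hi hj
    rcases hi with rfl | rfl <;> rcases hj with rfl | rfl <;>
      simp only [Set.restrict_apply, Subtype.mk.injEq, if_pos rfl, hne, hne.symm, if_false,
        e00, e11, e01, e10]
    · simpa [Set.restrict] using e00
    · simpa [Set.restrict, hne] using e01
    · simpa [Set.restrict, hne.symm] using e10
    · simpa [Set.restrict] using e11
  obtain ⟨b, hb⟩ := horth.exists_orthonormalBasis_extension_of_card_eq (by simp)
  have hb0 : b i0 = ‖v‖⁻¹ • v := by
    rw [hb i0 (by simp)]; simp [f]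
  have hb1 : b i1 = ‖w‖⁻¹ • w := by
    rw [hb i1 (by simp)]; simp [f, hne.symm]
  have hbo := orthonormal_iff_ite.mp b.orthonormal
  have key : ∀ i j, ⟪b i, shear w v (b j)⟫
      = (if i = j then (1:ℝ) else 0) + (‖w‖ * ‖v‖) * (if i1 = j then 1 else 0) * (if i = i0 then 1 else 0) := by
    intro i j
    have hwbj : ⟪w, b j⟫ = ‖w‖ * (if i1 = j then 1 else 0) := by
      have : w = ‖w‖ • b i1 := by rw [hb1, smul_smul, mul_inv_cancel₀ hnw, one_smul]
      conv_lhs => rw [this]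
      rw [real_inner_smul_left, hbo i1 j]
    have hbiv : ⟪b i, v⟫ = ‖v‖ * (if i = i0 then 1 else 0) := by
      have : v = ‖v‖ • b i0 := by rw [hb0, smul_smul, mul_inv_cancel₀ hnv, one_smul]
      conv_lhs => rw [this]
      rw [real_inner_smul_right, hbo i i0]
    rw [shear_apply, inner_add_right, real_inner_smul_right, hbo i j, hwbj, hbiv]
    ring
  have hent : ∀ (c : ℝ) (i j : Fin n),
      ((if i = j then (1:ℝ) else 0) + c * (if i1 = j then 1 else 0) * (if i = i0 then 1 else 0))
        = Matrix.transvection i0 i1 c i j := by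
    intro c i j
    simp only [Matrix.transvection, Matrix.add_apply, Matrix.one_apply, Matrix.smul_apply,
      smul_eq_mul, Matrix.single, Matrix.of_apply]
    by_cases hC : i = i0 <;> by_cases hB : i1 = j
    · subst hC; subst hB
      simp [hne]
    · subst hC; simp [hB]
    · simp [hB, hC, Ne.symm hC]
    · simp [hB, hC]
  have hmat : LinearMap.toMatrix b.toBasis b.toBasis (shear w v)
      = Matrix.transvection i0 i1 (‖w‖ * ‖v‖) := by
    ext i j
    rw [LinearMap.toMatrix_apply, OrthonormalBasis.coe_toBasis_repr_apply,
      OrthonormalBasis.repr_apply_apply, OrthonormalBasis.coe_toBasis, key]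
    exact hent _ i j
  rw [← LinearMap.det_toMatrix b.toBasis, hmat, Matrix.det_transvection_of_ne _ _ hne]

lemma dense_compl_span_singleton {n : ℕ} (hn : 2 ≤ n) (w : Eucl n) :
    Dense ((Submodule.span ℝ ({w} : Set (Eucl n)) : Set (Eucl n))ᶜ) := by
  rw [← interior_eq_empty_iff_dense_compl]
  by_contra h
  have hne : (interior (Submodule.span ℝ ({w} : Set (Eucl n)) : Set (Eucl n))).Nonempty :=
    Set.nonempty_iff_ne_empty.mpr h
  have htop := Submodule.eq_top_of_nonempty_interior' _ hne
  by_cases hw0 : w = 0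
  · rw [hw0] at htop
    simp at htop
    have := finrank_top ℝ (Eucl n)
    rw [← htop] at this
    simp [finrank_euclideanSpace] at this
    omega
  · have h1 : Module.finrank ℝ (Submodule.span ℝ ({w} : Set (Eucl n))) = 1 :=
      finrank_span_singleton hw0
    rw [htop, finrank_top, finrank_euclideanSpace] at h1
    simp at h1
    omega


/-- For `n ≥ 2`, an `SL(n)`-covariant map `Φ : 𝒫ⁿ_o → C_p(ℝⁿ)`
satisfies `Φ(P)(x) = Φ(P)(π_P x)`, where `π_P` is the orthogonal projection onto the
linear hull of `P`. -/
theorem statement_12 (n : ℕ) (hn : 2 ≤ n) (p : ℝ) (hp : 1 < p)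
    (Φ : Set (Eucl n) → Eucl n → ℝ)
    (hCp : ∀ P : Set (Eucl n), IsPolytopeO P → Continuous (Φ P) ∧
      ∀ s : ℝ, 0 < s → ∀ u : Eucl n, Φ P (s • u) = s ^ p * Φ P u)
    (hcov : ∀ P : Set (Eucl n), IsPolytopeO P →
      ∀ φ : Eucl n →ₗ[ℝ] Eucl n, LinearMap.det φ = 1 →
        Φ (φ '' P) = Φ P ∘ LinearMap.adjoint φ) :
    ∀ P : Set (Eucl n), IsPolytopeO P → ∀ x : Eucl n,
      Φ P x = Φ P (Submodule.orthogonalProjection (Submodule.span ℝ P) x : Eucl n) := by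
  intro P hP x
  obtain ⟨hc, -⟩ := hCp P hP
  have key : ∀ w ∈ (Submodule.span ℝ P)ᗮ, ∀ y : Eucl n, Φ P (y + w) = Φ P y := by
    intro w hw
    by_cases hw0 : w = 0
    · simp [hw0]
    have hd := dense_compl_span_singleton hn w
    have heq : (fun y : Eucl n => Φ P (y + w)) = Φ P := by
      apply Continuous.ext_on hd (hc.comp (continuous_id.add continuous_const)) hc
      intro y hy
      rw [Set.mem_compl_iff] at hy
      have hnw : ‖w‖ ≠ 0 := norm_ne_zero_iff.mpr hw0
      set c : ℝ := ⟪w, y⟫ / ‖w‖ ^ 2 with hc'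
      set v0 : Eucl n := y - c • w with hv0
      have hwv0 : ⟪w, v0⟫ = 0 := by
        rw [hv0, inner_sub_right, real_inner_smul_right, real_inner_self_eq_norm_sq, hc']
        field_simp
        ring
      have hv0ne : v0 ≠ 0 := by
        intro h
        apply hy
        have hyc : y = c • w := by rwa [hv0, sub_eq_zero] at h
        rw [hyc]
        exact Submodule.smul_mem _ _ (Submodule.mem_span_singleton_self w)
      have hn0 : ‖v0‖ ≠ 0 := norm_ne_zero_iff.mpr hv0ne
      have hv0y : ⟪v0, y⟫ = ‖v0‖ ^ 2 := by
        have hy' : y = v0 + c • w := by rw [hv0]; abel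
        have hv0w : ⟪v0, w⟫ = 0 := by rw [real_inner_comm]; exact hwv0
        rw [hy', inner_add_right, real_inner_smul_right, hv0w, real_inner_self_eq_norm_sq]
        ring
      set v : Eucl n := (‖v0‖ ^ 2)⁻¹ • v0 with hv
      have hvne : v ≠ 0 := smul_ne_zero (inv_ne_zero (pow_ne_zero _ hn0)) hv0ne
      have hwv : ⟪w, v⟫ = 0 := by rw [hv, real_inner_smul_right, hwv0]; ring
      have hvy : ⟪v, y⟫ = 1 := by
        rw [hv, real_inner_smul_left, hv0y]
        field_simp
      have hdet := shear_det hn w v hw0 hvne hwv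
      have himg : (shear w v) '' P = P := by
        have hfix : ∀ z ∈ P, shear w v z = z := by
          intro z hz
          have hz' : z ∈ Submodule.span ℝ P := Submodule.subset_span hz
          have hzw : ⟪w, z⟫ = 0 := by
            rw [real_inner_comm]
            exact (Submodule.mem_orthogonal (Submodule.span ℝ P) w).mp hw z hz'
          rw [shear_apply, hzw, zero_smul, add_zero]
        rw [Set.image_congr hfix, Set.image_id']
      have hΦ := hcov P hP (shear w v) hdet
      rw [himg, shear_adjoint] at hΦ
      have h2 := congrFun hΦ y
      rw [Function.comp_apply, shear_apply, hvy, one_smul] at h2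
      exact h2.symm
    exact fun y => congrFun heq y
  have hproj : x - (Submodule.orthogonalProjection (Submodule.span ℝ P) x : Eucl n) ∈ (Submodule.span ℝ P)ᗮ := Submodule.sub_starProjection_mem_orthogonal (K := Submodule.span ℝ P) x
  have h3 := key _ hproj (Submodule.orthogonalProjection (Submodule.span ℝ P) x)
  have h4 : (Submodule.orthogonalProjection (Submodule.span ℝ P) x : Eucl n) + (x - Submodule.orthogonalProjection (Submodule.span ℝ P) x) = x := by abel
  rw [h4] at h3
  convert h3 using 2
end
end
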